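/- arXiv:0909.3802 — 7 statements merged into one kernel-verified Lean document; each statement's English description precedes it below -/
import Mathlib

section
/- Let m_1 ≥ m_2 ≥ … ≥ m_s ≥ 0 be integers with m_1 + m_2 ≥ n, let τ = max{ i : m_1 + m_i ≥ n } and v = Σ_{i=2}^{τ} (m_1 + m_i − n + 1). If 2m_1 − n + 2 ≤ v ≤ m_1 and τ ≥ 4, then there exist subspaces W_1, …, W_s of ℂ^{n+1} with dim W_i = m_i + 1 such that Q(W_1,…,W_s) = {0}; that is, for a generic configuration of linear spaces Λ of weight vector (m_1,…,m_s) in P^n one has dim (I_Λ)_2 = 0. -/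
/-!
Split the coordinates of `K^N`, `N = v + a + b`, into `R = [0, v)`, `A = [v, v + a)` and
`B = [v + a, N)`, and `R` into consecutive blocks `R_2, …, R_τ` of sizes `c_i`. Take
`W_1 = ⟨R ∪ A⟩`, `W_i = ⟨R_i ∪ B⟩` for `2 ≤ i ≤ τ` and `W_i ⊆ ⟨B⟩` for `i > τ`, except that in
`W_3` and `W_4` the basis vectors of `B` are tilted into `A` along the graphs of the shifts
`e_{v+a+s+k} ↦ e_{v+k}` (`k < a`, `s = 0, 1`). If a quadratic form vanishes on every `W_i`, its
polar form vanishes on `(R ∪ A)²`, on `B²` and on `R × B`, while on `A × B` its matrix `M`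
satisfies: `J_sᵀ M` is antisymmetric for both shift matrices `J_s`. Since `a < b` this forces
`M = 0`, because `M i j = -M j i = M (i - 1) (j + 1)` for `j < a` and `M i j = 0` for `j ≥ a`.
For the theorem, `a = m_1 + 1 - v` and `b = n - m_1`, so that `a < b` is `2m_1 - n + 2 ≤ v`.
-/

open Finset Submodule Module QuadraticMap

theorem QuadraticMap.eq_zero_of_basis {R M N ι : Type*} [CommRing R] [AddCommGroup M]
    [AddCommGroup N] [Module R M] [Module R N] [LinearOrder ι] (Q : QuadraticMap R M N)
    (bm : Basis ι R M) (hQ : ∀ i, Q (bm i) = 0) (hpolar : ∀ i j, polar Q (bm i) (bm j) = 0) :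
    Q = 0 := by
  have h : Q.toBilin bm = 0 := bm.ext fun i => bm.ext fun j => by simp [toBilin_apply, hQ, hpolar]
  rw [← toQuadraticMap_toBilin Q bm, h]
  rfl

theorem QuadraticMap.polar_eq_zero_of_mem {R M N : Type*} [CommRing R] [AddCommGroup M]
    [AddCommGroup N] [Module R M] [Module R N] {Q : QuadraticMap R M N} {W : Submodule R M}
    (hW : ∀ x ∈ W, Q x = 0) {x y : M} (hx : x ∈ W) (hy : y ∈ W) : polar Q x y = 0 := by
  simp [polar, hW _ (add_mem hx hy), hW x hx, hW y hy]

section Coordinates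

variable {K : Type*} [Field K] {N : ℕ}

variable (K) in
def stdVec (N p : ℕ) : Fin N → K := if h : p < N then Pi.single ⟨p, h⟩ 1 else 0

lemma stdVec_apply {p : ℕ} (h : p < N) (j : Fin N) :
    stdVec K N p j = if (j : ℕ) = p then 1 else 0 := by
  simp [stdVec, h, Pi.single_apply, Fin.ext_iff]

lemma stdVec_apply_of_ne {p : ℕ} {j : Fin N} (h : (j : ℕ) ≠ p) : stdVec K N p j = 0 := by
  unfold stdVec
  split_ifs with hp
  · exact Pi.single_eq_of_ne (by simpa [Fin.ext_iff] using h) 1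
  · rfl

lemma stdVec_val (j : Fin N) : stdVec K N j = Pi.single j 1 := by
  simp [stdVec]

-- `p ↦ e_p + tilt K N v a s p` maps `e_{v+a+s+k}` to `e_{v+a+s+k} + e_{v+k}` for `k < a`.
variable (K N) in
def tiltedSpan (S : Finset ℕ) (φ : ℕ → Fin N → K) : Submodule K (Fin N → K) :=
  span K ((fun p => stdVec K N p + φ p) '' S)

variable (K N) in
def coordSpan (S : Finset ℕ) : Submodule K (Fin N → K) :=
  span K (stdVec K N '' S)

@[simp]
lemma tiltedSpan_zero (S : Finset ℕ) : tiltedSpan K N S 0 = coordSpan K N S := by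
  simp [tiltedSpan, coordSpan]

lemma tiltedSpan_mono {S T : Finset ℕ} (h : S ⊆ T) (φ : ℕ → Fin N → K) :
    tiltedSpan K N S φ ≤ tiltedSpan K N T φ :=
  span_mono (Set.image_mono (coe_subset.mpr h))

lemma add_mem_tiltedSpan {S : Finset ℕ} {φ : ℕ → Fin N → K} {p : ℕ} (hp : p ∈ S) :
    stdVec K N p + φ p ∈ tiltedSpan K N S φ :=
  subset_span ⟨p, hp, rfl⟩

lemma stdVec_mem_coordSpan {S : Finset ℕ} {p : ℕ} (hp : p ∈ S) :
    stdVec K N p ∈ coordSpan K N S :=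
  subset_span ⟨p, hp, rfl⟩

lemma finrank_tiltedSpan {S : Finset ℕ} {φ : ℕ → Fin N → K} (hS : ∀ p ∈ S, p < N)
    (hφ : ∀ p ∈ S, ∀ j : Fin N, (j : ℕ) ∈ S → φ p j = 0) :
    finrank K (tiltedSpan K N S φ) = S.card := by
  classical
  let f : S → Fin N → K := fun p => stdVec K N p + φ p
  let r : (Fin N → K) →ₗ[K] (S → K) := LinearMap.funLeft K K fun p => ⟨p, hS p p.2⟩
  have hr : r ∘ f = Pi.basisFun K S := by
    ext p j
    simp only [r, f, Function.comp_apply, LinearMap.funLeft_apply, Pi.add_apply,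
      Pi.basisFun_apply, stdVec_apply (hS p p.2), hφ p p.2 ⟨j, hS j j.2⟩ j.2, add_zero]
    simp only [Pi.single_apply, Subtype.ext_iff]
  have hf : LinearIndependent K f := .of_comp r (hr ▸ (Pi.basisFun K S).linearIndependent)
  rw [tiltedSpan, Set.image_eq_range]
  exact (finrank_span_eq_card hf).trans (Fintype.card_coe S)

variable {v a : ℕ}

-- `p ↦ e_p + tilt K N v a s p` maps `e_{v+a+s+k}` to `e_{v+a+s+k} + e_{v+k}` for `k < a`.
variable (K N) in
def tilt (v a s p : ℕ) : Fin N → K :=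
  if v + a + s ≤ p ∧ p < v + a + s + a then stdVec K N (p - (a + s)) else 0

lemma tilt_add (s k : ℕ) : tilt K N v a s (v + a + k) =
    if s ≤ k ∧ k < s + a then stdVec K N (v + (k - s)) else 0 := by
  by_cases h : s ≤ k ∧ k < s + a
  · rw [tilt, if_pos (by omega), if_pos h, show v + a + k - (a + s) = v + (k - s) by omega]
  · rw [tilt, if_neg (by omega), if_neg h]

lemma tilt_of_lt {s p : ℕ} (hp : p < v + a) : tilt K N v a s p = 0 := by
  rw [tilt, if_neg (by omega)]

lemma tilt_mem_coordSpan (s p : ℕ) : tilt K N v a s p ∈ coordSpan K N (range (v + a)) := by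
  unfold tilt
  split_ifs with h
  · exact stdVec_mem_coordSpan (mem_range.2 (by omega))
  · exact zero_mem _

lemma tilt_apply_eq_zero {s p : ℕ} {j : Fin N} (hj : (j : ℕ) < v ∨ v + a ≤ j) :
    tilt K N v a s p j = 0 := by
  unfold tilt
  split_ifs with h
  · exact stdVec_apply_of_ne (by omega)
  · rfl

end Coordinates

theorem eq_zero_of_shift_antisymm {G : Type*} [AddZeroClass G] {a b : ℕ} (hab : a < b)
    (M : ℕ → ℕ → G)
    (h : ∀ s ≤ 1, ∀ k < b, ∀ l < b,
      (if s ≤ l ∧ l < s + a then M (l - s) k else 0) +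
        (if s ≤ k ∧ k < s + a then M (k - s) l else 0) = 0) :
    ∀ i < a, ∀ j < b, M i j = 0 := by
  intro i
  induction i using Nat.strong_induction_on with
  | _ i ih =>
  intro hi j hj
  have h₀ := h 0 zero_le_one i (by omega) j hj
  by_cases hja : j < a
  · have h₁ := h 1 le_rfl (j + 1) (by omega) i (by omega)
    have hji : M j i = 0 := by
      rcases i with _ | i
      · simpa [hja, show j + 1 < 1 + a by omega] using h₁
      · simpa [hja, show j + 1 < 1 + a by omega, ih i (by omega) (by omega) (j + 1) (by omega)]
          using h₁
    simpa [hja, hi, hji] using h₀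
  · simpa [hja, hi] using h₀

section Vanishing

variable {K : Type*} [Field K] {N v a b : ℕ} (q : QuadraticForm K (Fin N → K))

lemma polar_stdVec_eq_zero {S : Finset ℕ} (hS : ∀ x ∈ coordSpan K N S, q x = 0) {p p' : ℕ}
    (hp : p ∈ S) (hp' : p' ∈ S) : polar q (stdVec K N p) (stdVec K N p') = 0 :=
  polar_eq_zero_of_mem hS (stdVec_mem_coordSpan hp) (stdVec_mem_coordSpan hp')

lemma polar_tilt_antisymm (hN : v + a + b = N)
    (hA : ∀ x ∈ coordSpan K N (range (v + a)), q x = 0)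
    (hB : ∀ x ∈ coordSpan K N (Ico (v + a) N), q x = 0) {s : ℕ}
    (hs : ∀ x ∈ tiltedSpan K N (Ico (v + a) N) (tilt K N v a s), q x = 0)
    {k l : ℕ} (hk : k < b) (hl : l < b) :
    (if s ≤ l ∧ l < s + a then polar q (stdVec K N (v + (l - s))) (stdVec K N (v + a + k))
      else 0) +
    (if s ≤ k ∧ k < s + a then polar q (stdVec K N (v + (k - s))) (stdVec K N (v + a + l))
      else 0) = 0 := by
  have hmem : ∀ k < b, stdVec K N (v + a + k) + tilt K N v a s (v + a + k) ∈
      tiltedSpan K N (Ico (v + a) N) (tilt K N v a s) :=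
    fun k hk => add_mem_tiltedSpan (mem_Ico.2 ⟨by omega, by omega⟩)
  have h := polar_eq_zero_of_mem hs (hmem k hk) (hmem l hl)
  rw [polar_add_left, polar_add_right, polar_add_right,
    polar_stdVec_eq_zero q hB (mem_Ico.2 ⟨by omega, by omega⟩) (mem_Ico.2 ⟨by omega, by omega⟩),
    zero_add, tilt_add, tilt_add] at h
  by_cases hk' : s ≤ k ∧ k < s + a <;> by_cases hl' : s ≤ l ∧ l < s + a <;>
    simp only [hk', hl', and_self, if_true, if_false, polar_zero_left, polar_zero_right,
      add_zero, zero_add] at h ⊢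
  · rwa [polar_stdVec_eq_zero q hA (p := v + (k - s)) (p' := v + (l - s))
      (mem_range.2 (by omega)) (mem_range.2 (by omega)), add_zero, polar_comm] at h
  · exact h
  · rwa [polar_comm] at h

theorem eq_zero_of_isotropic_tiltedSpans (hN : v + a + b = N) (hab : a < b)
    (hA : ∀ x ∈ coordSpan K N (range (v + a)), q x = 0)
    (hB : ∀ x ∈ coordSpan K N (Ico (v + a) N), q x = 0)
    (htilt : ∀ s ≤ 1, ∀ x ∈ tiltedSpan K N (Ico (v + a) N) (tilt K N v a s), q x = 0)
    (hR : ∀ p < v, ∀ p' ∈ Ico (v + a) N, ∃ z ∈ coordSpan K N (range (v + a)),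
      polar q (stdVec K N p) (stdVec K N p' + z) = 0) :
    q = 0 := by
  have hRB : ∀ p < v, ∀ p' ∈ Ico (v + a) N, polar q (stdVec K N p) (stdVec K N p') = 0 := by
    intro p hp p' hp'
    obtain ⟨z, hz, h⟩ := hR p hp p' hp'
    rwa [polar_add_right, polar_eq_zero_of_mem hA (stdVec_mem_coordSpan (mem_range.2 (by omega)))
      hz, add_zero] at h
  have hAB : ∀ i < a, ∀ j < b, polar q (stdVec K N (v + i)) (stdVec K N (v + a + j)) = 0 :=
    eq_zero_of_shift_antisymm hab _ fun s hs k hk l hl =>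
      polar_tilt_antisymm q hN hA hB (htilt s hs) hk hl
  have hle : ∀ p p' : ℕ, p ≤ p' → p' < N → polar q (stdVec K N p) (stdVec K N p') = 0 := by
    intro p p' hpp' hp'
    by_cases hp'A : p' < v + a
    · exact polar_stdVec_eq_zero q hA (mem_range.2 (by omega)) (mem_range.2 hp'A)
    by_cases hpB : v + a ≤ p
    · exact polar_stdVec_eq_zero q hB (mem_Ico.2 ⟨hpB, by omega⟩) (mem_Ico.2 ⟨by omega, hp'⟩)
    by_cases hpR : p < v
    · exact hRB p hpR p' (mem_Ico.2 ⟨by omega, hp'⟩)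
    simpa [show v + (p - v) = p by omega, show v + a + (p' - (v + a)) = p' by omega]
      using hAB (p - v) (by omega) (p' - (v + a)) (by omega)
  refine eq_zero_of_basis q (Pi.basisFun K (Fin N)) (fun i => ?_) (fun i j => ?_)
  · rw [Pi.basisFun_apply, ← stdVec_val]
    by_cases hi : (i : ℕ) < v + a
    · exact hA _ (stdVec_mem_coordSpan (mem_range.2 hi))
    · exact hB _ (stdVec_mem_coordSpan (mem_Ico.2 ⟨by omega, i.2⟩))
  · rw [Pi.basisFun_apply, Pi.basisFun_apply, ← stdVec_val, ← stdVec_val]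
    rcases le_total (i : ℕ) j with h | h
    · exact hle _ _ h j.2
    · rw [polar_comm]
      exact hle _ _ h i.2

end Vanishing

section Configuration

variable (K : Type*) [Field K] (N v a τ : ℕ) (d k : ℕ → ℕ)

def configBlock (i : ℕ) : Finset ℕ :=
  if i = 1 then range (v + a)
  else if i ≤ τ then Ico (d (i - 1)) (d i) ∪ Ico (v + a) N
  else Ico (v + a) (v + a + k i)

def configTilt (i : ℕ) : ℕ → Fin N → K :=
  if i = 3 then tilt K N v a 0 else if i = 4 then tilt K N v a 1 else 0

def configSpan (i : ℕ) : Submodule K (Fin N → K) :=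
  tiltedSpan K N (configBlock N v a τ d k i) (configTilt K N v a i)

variable {K N v a τ d k}

lemma configTilt_of_lt {i p : ℕ} (hp : p < v + a) : configTilt K N v a i p = 0 := by
  unfold configTilt
  split_ifs <;> simp [tilt_of_lt hp]

lemma configTilt_mem_coordSpan (i p : ℕ) :
    configTilt K N v a i p ∈ coordSpan K N (range (v + a)) := by
  unfold configTilt
  split_ifs
  exacts [tilt_mem_coordSpan 0 p, tilt_mem_coordSpan 1 p, zero_mem _]

lemma configTilt_apply_eq_zero {i p : ℕ} {j : Fin N} (hj : (j : ℕ) < v ∨ v + a ≤ j) :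
    configTilt K N v a i p j = 0 := by
  unfold configTilt
  split_ifs
  exacts [tilt_apply_eq_zero hj, tilt_apply_eq_zero hj, rfl]

lemma configSpan_one : configSpan K N v a τ d k 1 = coordSpan K N (range (v + a)) := by
  simp [configSpan, configBlock, configTilt]

lemma configSpan_of_le {i : ℕ} (hi : 2 ≤ i) (hiτ : i ≤ τ) :
    configSpan K N v a τ d k i =
      tiltedSpan K N (Ico (d (i - 1)) (d i) ∪ Ico (v + a) N) (configTilt K N v a i) := by
  rw [configSpan, configBlock, if_neg (by omega), if_pos hiτ]

lemma coordSpan_le_configSpan_two (hτ : 2 ≤ τ) :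
    coordSpan K N (Ico (v + a) N) ≤ configSpan K N v a τ d k 2 := by
  rw [configSpan_of_le le_rfl hτ, ← tiltedSpan_zero]
  exact tiltedSpan_mono subset_union_right _

lemma tiltedSpan_le_configSpan {s : ℕ} (hs : s ≤ 1) (hτ : s + 3 ≤ τ) :
    tiltedSpan K N (Ico (v + a) N) (tilt K N v a s) ≤ configSpan K N v a τ d k (s + 3) := by
  rw [configSpan_of_le (by omega) hτ]
  convert tiltedSpan_mono subset_union_right _
  interval_cases s <;> rfl

lemma finrank_configSpan_one (hN : v + a ≤ N) :
    finrank K (configSpan K N v a τ d k 1) = v + a := by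
  rw [configSpan_one, ← tiltedSpan_zero,
    finrank_tiltedSpan (φ := 0) (fun p hp => by simp at hp; omega) (fun _ _ _ _ => rfl),
    card_range]

lemma finrank_configSpan_of_le {i : ℕ} (hi : 2 ≤ i) (hiτ : i ≤ τ) (hdv : d i ≤ v)
    (hN : v + a ≤ N) :
    finrank K (configSpan K N v a τ d k i) = d i - d (i - 1) + (N - (v + a)) := by
  have hdisj : Disjoint (Ico (d (i - 1)) (d i)) (Ico (v + a) N) :=
    disjoint_left.2 fun p hp hp' => by simp only [mem_Ico] at hp hp'; omega
  rw [configSpan_of_le hi hiτ, finrank_tiltedSpan, card_union_of_disjoint hdisj, Nat.card_Ico,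
    Nat.card_Ico]
  · intro p hp
    simp only [mem_union, mem_Ico] at hp
    omega
  · intro p _ j hj
    simp only [mem_union, mem_Ico] at hj
    exact configTilt_apply_eq_zero (by omega)

lemma finrank_configSpan_of_lt {i : ℕ} (hi : i ≠ 1) (hτi : τ < i) (hN : v + a + k i ≤ N) :
    finrank K (configSpan K N v a τ d k i) = k i := by
  rw [configSpan, configBlock, if_neg hi, if_neg (by omega), finrank_tiltedSpan,
    Nat.card_Ico, Nat.add_sub_cancel_left]
  · intro p hp
    simp only [mem_Ico] at hp
    omega
  · intro p _ j hj
    simp only [mem_Ico] at hj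
    exact configTilt_apply_eq_zero (by omega)

lemma exists_polar_eq_zero_of_configSpan {q : QuadraticForm K (Fin N → K)} {i : ℕ} (hi : 2 ≤ i)
    (hiτ : i ≤ τ) (hdv : d i ≤ v) (hq : ∀ x ∈ configSpan K N v a τ d k i, q x = 0) {p p' : ℕ}
    (hp : p ∈ Ico (d (i - 1)) (d i)) (hp' : p' ∈ Ico (v + a) N) :
    ∃ z ∈ coordSpan K N (range (v + a)), polar q (stdVec K N p) (stdVec K N p' + z) = 0 := by
  have hpv : p < v + a := by simp only [mem_Ico] at hp; omega
  refine ⟨configTilt K N v a i p', configTilt_mem_coordSpan i p', polar_eq_zero_of_mem hq ?_ ?_⟩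
  · simpa [configSpan_of_le hi hiτ, configTilt_of_lt hpv] using
      add_mem_tiltedSpan (φ := configTilt K N v a i) (mem_union_left _ hp)
  · rw [configSpan_of_le hi hiτ]
    exact add_mem_tiltedSpan (mem_union_right _ hp')

end Configuration

lemma exists_mem_Ico_pred_of_lt (d : ℕ → ℕ) (hd : ∀ i < 2, d i = 0) {p τ : ℕ} (hp : p < d τ) :
    ∃ i, 2 ≤ i ∧ i ≤ τ ∧ p ∈ Ico (d (i - 1)) (d i) := by
  classical
  have hex : ∃ i, p < d i := ⟨τ, hp⟩
  have hi : p < d (Nat.find hex) := Nat.find_spec hex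
  have h2 : 2 ≤ Nat.find hex := by
    by_contra h
    rw [hd _ (by omega)] at hi
    omega
  refine ⟨Nat.find hex, h2, Nat.find_min' hex hp, mem_Ico.2 ⟨?_, hi⟩⟩
  exact not_lt.1 (Nat.find_min hex (by omega))

theorem exists_subspaces_forall_quadraticForm_eq_zero {K : Type*} [Field K] {N v a b τ s : ℕ}
    (c k : ℕ → ℕ) (hN : v + a + b = N) (hab : a < b) (hτ : 4 ≤ τ) (hτs : τ ≤ s)
    (hv : ∑ i ∈ Icc 2 τ, c i = v) (hk₁ : k 1 = v + a) (hk : ∀ i ∈ Icc 2 τ, k i = c i + b)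
    (hk' : ∀ i ∈ Ioc τ s, k i ≤ b) :
    ∃ W : ℕ → Submodule K (Fin N → K), (∀ i ∈ Icc 1 s, finrank K (W i) = k i) ∧
      ∀ q : QuadraticForm K (Fin N → K), (∀ i ∈ Icc 1 s, ∀ x ∈ W i, q x = 0) → q = 0 := by
  set d : ℕ → ℕ := fun i => ∑ j ∈ Icc 2 i, c j
  have hdv : ∀ i ≤ τ, d i ≤ v := fun i hi => hv ▸ sum_le_sum_of_subset (Icc_subset_Icc_right hi)
  have hc : ∀ i, 2 ≤ i → d i - d (i - 1) = c i := by
    intro i hi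
    obtain ⟨j, rfl⟩ : ∃ j, i = j + 1 := ⟨i - 1, by omega⟩
    simp [d, sum_Icc_succ_top (show 2 ≤ j + 1 by omega)]
  refine ⟨configSpan K N v a τ d k, fun i hi => ?_, fun q hq => ?_⟩
  · obtain ⟨hi1, his⟩ := mem_Icc.1 hi
    rcases Nat.lt_or_ge τ i with hτi | hiτ
    · have := hk' i (mem_Ioc.2 ⟨hτi, his⟩)
      exact finrank_configSpan_of_lt (K := K) (by omega) hτi (by omega)
    rcases Nat.lt_or_ge i 2 with hi2 | hi2
    · obtain rfl : i = 1 := by omega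
      rw [finrank_configSpan_one (by omega), hk₁]
    · rw [finrank_configSpan_of_le hi2 hiτ (hdv i hiτ) (by omega), hc i hi2,
        hk i (mem_Icc.2 ⟨hi2, hiτ⟩)]
      omega
  refine eq_zero_of_isotropic_tiltedSpans q hN hab ?_ ?_ ?_ ?_
  · rw [← configSpan_one (τ := τ) (d := d) (k := k)]
    exact hq 1 (mem_Icc.2 ⟨le_rfl, by omega⟩)
  · exact fun x hx => hq 2 (mem_Icc.2 ⟨by omega, by omega⟩) x
      (coordSpan_le_configSpan_two (by omega) hx)
  · exact fun t ht x hx => hq (t + 3) (mem_Icc.2 ⟨by omega, by omega⟩) x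
      (tiltedSpan_le_configSpan ht (by omega) hx)
  · intro p hp p' hp'
    obtain ⟨i, hi2, hiτ, hpi⟩ :=
      exists_mem_Ico_pred_of_lt d (fun i hi => by interval_cases i <;> rfl) (hv ▸ hp)
    exact exists_polar_eq_zero_of_configSpan hi2 hiτ (hdv i hiτ)
      (hq i (mem_Icc.2 ⟨by omega, by omega⟩)) hpi hp'

-- `m` is 1-indexed; `2 * m 1 + 2 ≤ v + n` is `2m_1 - n + 2 ≤ v` without truncated subtraction.
/-- Intersecting case (ii)(a): if `2m_1 - n + 2 ≤ v ≤ m_1` and `τ ≥ 4`, a generic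
configuration of linear spaces of weight vector `(m_1, …, m_s)` lies on no quadric.
Here `τ = max{ i ≤ s : m_1 + m_i ≥ n }` and `v = Σ_{i=2}^{τ} (m_1 + m_i - n + 1)`.
(`m` is 1-indexed; the inequality `2m_1 - n + 2 ≤ v` is stated additively to avoid
truncated subtraction.) -/
theorem stmt6 (n s : ℕ) (m : ℕ → ℕ) (hs : 2 ≤ s)
    (hmono : ∀ i j, 1 ≤ i → i ≤ j → j ≤ s → m j ≤ m i)
    (h12 : n ≤ m 1 + m 2)
    (τ v : ℕ)
    (hτ : τ = Nat.findGreatest (fun i => n ≤ m 1 + m i) s)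
    (hv : v = ∑ i ∈ Finset.Icc 2 τ, (m 1 + m i + 1 - n))
    (hlow : 2 * m 1 + 2 ≤ v + n) (hhigh : v ≤ m 1)
    (hτ4 : 4 ≤ τ) :
    ∃ W : ℕ → Submodule ℂ (Fin (n + 1) → ℂ),
      (∀ i ∈ Finset.Icc 1 s, Module.finrank ℂ (W i) = m i + 1) ∧
      ∀ q : QuadraticForm ℂ (Fin (n + 1) → ℂ),
        (∀ i ∈ Finset.Icc 1 s, ∀ x ∈ W i, q x = 0) → q = 0 := by
  have hτs : τ ≤ s := hτ ▸ Nat.findGreatest_le s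
  have hτP : n ≤ m 1 + m τ := hτ ▸ Nat.findGreatest_spec (P := fun i => n ≤ m 1 + m i) hs h12
  refine exists_subspaces_forall_quadraticForm_eq_zero (a := m 1 + 1 - v) (b := n - m 1)
    (fun i => m 1 + m i + 1 - n) (fun i => m i + 1) (by omega) (by omega) hτ4 hτs hv.symm
    (by omega) (fun i hi => ?_) (fun i hi => ?_)
  · obtain ⟨hi2, hiτ⟩ := mem_Icc.1 hi
    have := hmono i τ (by omega) hiτ hτs
    omega
  · obtain ⟨hτi, his⟩ := mem_Ioc.1 hi
    have := Nat.findGreatest_is_greatest (P := fun i => n ≤ m 1 + m i) (hτ ▸ hτi) his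
    omega
end

section
/- Let m_1 ≥ m_2 ≥ … ≥ m_s ≥ 0 be integers with m_1 + m_2 ≥ n, let τ = max{ i : m_1 + m_i ≥ n } and v = Σ_{i=2}^{τ} (m_1 + m_i − n + 1). If 2m_1 − n + 2 ≤ v ≤ m_1, τ = 3, s ≥ 4, and 2n ≤ m_1 + m_2 + m_3 + m_4 + 2, then there exist subspaces W_1, …, W_s of ℂ^{n+1} with dim W_i = m_i + 1 such that Q(W_1,…,W_s) = {0}; that is, for a generic configuration of linear spaces Λ of weight vector (m_1,…,m_s) in P^n one has dim (I_Λ)_2 = 0. -/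
open Submodule

/-- The `i`-th coordinate vector of `ℂ^N` (with a natural-number index). -/
def ee (N i : ℕ) : Fin N → ℂ := fun x => if (x : ℕ) = i then 1 else 0

lemma ee_apply (N i : ℕ) (x : Fin N) : ee N i x = if (x : ℕ) = i then 1 else 0 := rfl

/-- A family of vectors of the form `e_{f j} + c j • e_{g j}`. -/
noncomputable def fam (N r : ℕ) (f g : ℕ → ℕ) (c : ℕ → ℂ) : Fin r → (Fin N → ℂ) :=
  fun j => ee N (f j) + c j • ee N (g j)

noncomputable def famSpan (N r : ℕ) (f g : ℕ → ℕ) (c : ℕ → ℂ) :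
    Submodule ℂ (Fin N → ℂ) :=
  span ℂ (Set.range (fam N r f g c))

lemma indep_general (N r : ℕ) (f g : ℕ → ℕ) (c : ℕ → ℂ)
    (hf : ∀ j, j < r → f j < N)
    (hinj : ∀ i j, i < r → j < r → f i = f j → i = j)
    (hsep : ∀ i j, i < r → j < r → c j ≠ 0 → f i ≠ g j) :
    LinearIndependent ℂ (fam N r f g c) := by
  rw [Fintype.linearIndependent_iff]
  intro co hco i
  have key : ∀ j : Fin r, fam N r f g c j ⟨f i, hf i i.isLt⟩ = if i = j then 1 else 0 := by
    intro j
    simp only [fam, Pi.add_apply, Pi.smul_apply, ee_apply, smul_eq_mul]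
    have h2 : c j * (if ((⟨f i, hf i i.isLt⟩ : Fin N) : ℕ) = g j then (1:ℂ) else 0) = 0 := by
      by_cases hc : c j = 0
      · rw [hc, zero_mul]
      · rw [if_neg (hsep i j i.isLt j.isLt hc), mul_zero]
    rw [h2, add_zero]
    by_cases hij : i = j
    · subst hij; simp
    · rw [if_neg, if_neg hij]
      intro h
      exact hij (Fin.ext (hinj i j i.isLt j.isLt h))
  have h1 := congrFun hco ⟨f i, hf i i.isLt⟩
  simp only [Finset.sum_apply, Pi.smul_apply, smul_eq_mul, Pi.zero_apply] at h1
  rw [Finset.sum_congr rfl (fun j _ => by rw [key j])] at h1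
  simp only [mul_ite, mul_one, mul_zero, Finset.sum_ite_eq, Finset.mem_univ, if_true] at h1
  exact h1

lemma famSpan_rank (N r : ℕ) (f g : ℕ → ℕ) (c : ℕ → ℂ)
    (hf : ∀ j, j < r → f j < N)
    (hinj : ∀ i j, i < r → j < r → f i = f j → i = j)
    (hsep : ∀ i j, i < r → j < r → c j ≠ 0 → f i ≠ g j) :
    Module.finrank ℂ (famSpan N r f g c) = r := by
  rw [famSpan, finrank_span_eq_card (indep_general N r f g c hf hinj hsep), Fintype.card_fin]

lemma mem_fam' (N r : ℕ) (f g : ℕ → ℕ) (c : ℕ → ℂ) {j t u : ℕ} {a : ℂ}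
    (hj : j < r) (ht : f j = t) (hu : g j = u) (ha : c j = a) :
    ee N t + a • ee N u ∈ famSpan N r f g c := by
  have : ee N t + a • ee N u = fam N r f g c ⟨j, hj⟩ := by
    simp [fam, ht, hu, ha]
  rw [this]
  exact subset_span (Set.mem_range_self _)

lemma mem_fam_of_f (N r : ℕ) (f g : ℕ → ℕ) (c : ℕ → ℂ) {j t : ℕ}
    (hj : j < r) (ht : f j = t) (ha : c j = 0) :
    ee N t ∈ famSpan N r f g c := by
  have := mem_fam' N r f g c (u := g j) (a := (0:ℂ)) hj ht rfl ha
  simpa using this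

lemma polar_zero_of_mem {N : ℕ} (q : QuadraticForm ℂ (Fin N → ℂ))
    {W : Submodule ℂ (Fin N → ℂ)} (h : ∀ x ∈ W, q x = 0)
    {x y : Fin N → ℂ} (hx : x ∈ W) (hy : y ∈ W) :
    QuadraticMap.polar q x y = 0 := by
  simp [QuadraticMap.polar, h _ hx, h _ hy, h _ (add_mem hx hy)]

lemma q_eq_zero_of_polar {N : ℕ} (q : QuadraticForm ℂ (Fin N → ℂ))
    (h : ∀ a b : ℕ, a < N → b < N → QuadraticMap.polar q (ee N a) (ee N b) = 0) :
    q = 0 := by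
  have hb : ∀ a : Fin N, (Pi.basisFun ℂ (Fin N)) a = ee N (a : ℕ) := by
    intro a
    rw [Pi.basisFun_apply]
    funext x
    rw [ee_apply, Pi.single_apply]
    simp [Fin.val_eq_val]
  have hBz : q.polarBilin = 0 := by
    apply (Pi.basisFun ℂ (Fin N)).ext
    intro a
    apply (Pi.basisFun ℂ (Fin N)).ext
    intro b
    simp only [QuadraticMap.polarBilin_apply_apply, LinearMap.zero_apply, hb]
    exact h _ _ a.isLt b.isLt
  ext x
  have h2 : QuadraticMap.polar q x x = 0 := by
    rw [← QuadraticMap.polarBilin_apply_apply, hBz]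
    simp
  rw [QuadraticMap.polar_self, two_smul, add_self_eq_zero] at h2
  simpa using h2

def f1 (a b : ℕ) (j : ℕ) : ℕ := if j < a then j else j - a + b

def f2 (u12 u13 u23 d : ℕ) (j : ℕ) : ℕ :=
  if j < u12 then j
  else if j < u12 + u23 then u12 + u13 + (j - u12)
  else u12 + u13 + u23 + d + (j - (u12 + u23))

def f3 (u12 u13 u23 : ℕ) (j : ℕ) : ℕ :=
  if j < u13 + u23 then u12 + j else u12 + u13 + u23 + (j - (u13 + u23))

def g3 (u12 u13 u23 d : ℕ) (j : ℕ) : ℕ :=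
  if j < u13 + u23 then u12 + j else u12 + u13 + u23 + d + (j - (u13 + u23))

noncomputable def c3 (u13 u23 : ℕ) (j : ℕ) : ℂ := if j < u13 + u23 then 0 else 1

def f4 (u12 u13 u23 d : ℕ) (j : ℕ) : ℕ :=
  if j < d then u12 + u13 + u23 + j else j - d

def g4 (u12 u13 u23 d : ℕ) (j : ℕ) : ℕ :=
  if j < d then u12 + u13 + u23 + d + j else 0

noncomputable def c4 (d : ℕ) (j : ℕ) : ℂ := if j < d then ((j : ℂ) + 1) else 0

/-- Intersecting case (ii)(b): if `2m_1 - n + 2 ≤ v ≤ m_1`, `τ = 3`, `s ≥ 4`, and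
`2n ≤ m_1 + m_2 + m_3 + m_4 + 2`, a generic configuration of linear spaces of weight
vector `(m_1, …, m_s)` lies on no quadric. Here `τ = max{ i ≤ s : m_1 + m_i ≥ n }` and
`v = Σ_{i=2}^{τ} (m_1 + m_i - n + 1)`. (`m` is 1-indexed.) -/
theorem stmt7 (n s : ℕ) (m : ℕ → ℕ) (hs : 2 ≤ s)
    (hmono : ∀ i j, 1 ≤ i → i ≤ j → j ≤ s → m j ≤ m i)
    (h12 : n ≤ m 1 + m 2)
    (τ v : ℕ)
    (hτ : τ = Nat.findGreatest (fun i => n ≤ m 1 + m i) s)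
    (hv : v = ∑ i ∈ Finset.Icc 2 τ, (m 1 + m i + 1 - n))
    (hlow : 2 * m 1 + 2 ≤ v + n) (hhigh : v ≤ m 1)
    (hτ3 : τ = 3) (hs4 : 4 ≤ s)
    (h2n : 2 * n ≤ m 1 + m 2 + m 3 + m 4 + 2) :
    ∃ W : ℕ → Submodule ℂ (Fin (n + 1) → ℂ),
      (∀ i ∈ Finset.Icc 1 s, Module.finrank ℂ (W i) = m i + 1) ∧
      ∀ q : QuadraticForm ℂ (Fin (n + 1) → ℂ),
        (∀ i ∈ Finset.Icc 1 s, ∀ x ∈ W i, q x = 0) → q = 0 := by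
  -- monotonicity facts
  have hm12 : m 2 ≤ m 1 := hmono 1 2 (by omega) (by omega) (by omega)
  have hm23 : m 3 ≤ m 2 := hmono 2 3 (by omega) (by omega) (by omega)
  have hm34 : m 4 ≤ m 3 := hmono 3 4 (by omega) (by omega) (by omega)
  -- τ facts
  have h13 : n ≤ m 1 + m 3 := by
    have h2' : (fun i => n ≤ m 1 + m i) 2 := h12
    have := Nat.findGreatest_spec (P := fun i => n ≤ m 1 + m i) (show 2 ≤ s by omega) h2'
    rw [← hτ, hτ3] at this
    exact this
  have h14 : m 1 + m 4 < n := by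
    by_contra h
    have h4' : (fun i => n ≤ m 1 + m i) 4 := show n ≤ m 1 + m 4 by omega
    have := Nat.le_findGreatest (P := fun i => n ≤ m 1 + m i) hs4 h4'
    omega
  -- the value of v
  have hicc : Finset.Icc 2 3 = {2, 3} := by decide
  have hvv : v = (m 1 + m 2 + 1 - n) + (m 1 + m 3 + 1 - n) := by
    rw [hv, hτ3, hicc, Finset.sum_pair (by decide : (2:ℕ) ≠ 3)]
  have h23 : n ≤ m 2 + m 3 := by omega
  have hsum3 : m 1 + m 2 + m 3 + 2 ≤ 2 * n := by omega
  -- the block sizes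
  obtain ⟨u12, u13, u23, d, e, hA1, hA2, hA3, hA4, hA5, hA6, hA7⟩ :
      ∃ u12 u13 u23 d e : ℕ,
        u12 + u13 + u23 + d + d = n + 1 ∧
        u12 + u13 + d = m 1 + 1 ∧
        u12 + u23 + d = m 2 + 1 ∧
        u13 + u23 + d = m 3 + 1 ∧
        d + e = m 4 + 1 ∧
        1 ≤ d ∧
        e ≤ u12 + u13 + u23 := by
    refine ⟨m 1 + m 2 + 1 - n, m 1 + m 3 + 1 - n, m 2 + m 3 + 1 - n,
      2 * n - 1 - (m 1 + m 2 + m 3), m 4 + 1 - (2 * n - 1 - (m 1 + m 2 + m 3)),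
      by omega, by omega, by omega, by omega, by omega, by omega, by omega⟩
  have hm1n : m 1 + 2 ≤ n := by omega
  -- the four special subspaces
  set W : ℕ → Submodule ℂ (Fin (n+1) → ℂ) := fun i =>
    if i = 1 then famSpan (n+1) (m 1 + 1) (f1 (u12+u13) (u12+u13+u23)) (f1 (u12+u13) (u12+u13+u23)) (fun _ => 0)
    else if i = 2 then famSpan (n+1) (m 2 + 1) (f2 u12 u13 u23 d) (f2 u12 u13 u23 d) (fun _ => 0)
    else if i = 3 then famSpan (n+1) (m 3 + 1) (f3 u12 u13 u23) (g3 u12 u13 u23 d) (c3 u13 u23)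
    else if i = 4 then famSpan (n+1) (m 4 + 1) (f4 u12 u13 u23 d) (g4 u12 u13 u23 d) (c4 d)
    else famSpan (n+1) (m i + 1) id id (fun _ => 0) with hWdef
  have eW1 : W 1 = famSpan (n+1) (m 1 + 1) (f1 (u12+u13) (u12+u13+u23)) (f1 (u12+u13) (u12+u13+u23)) (fun _ => 0) := rfl
  have eW2 : W 2 = famSpan (n+1) (m 2 + 1) (f2 u12 u13 u23 d) (f2 u12 u13 u23 d) (fun _ => 0) := rfl
  have eW3 : W 3 = famSpan (n+1) (m 3 + 1) (f3 u12 u13 u23) (g3 u12 u13 u23 d) (c3 u13 u23) := rfl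
  have eW4 : W 4 = famSpan (n+1) (m 4 + 1) (f4 u12 u13 u23 d) (g4 u12 u13 u23 d) (c4 d) := rfl
  have eWo : ∀ i, i ≠ 1 → i ≠ 2 → i ≠ 3 → i ≠ 4 →
      W i = famSpan (n+1) (m i + 1) id id (fun _ => 0) := by
    intro i h1 h2 h3 h4
    simp only [hWdef]
    rw [if_neg h1, if_neg h2, if_neg h3, if_neg h4]
  refine ⟨W, ?_, ?_⟩
  · -- the ranks
    intro i hi
    simp only [Finset.mem_Icc] at hi
    by_cases h1 : i = 1
    · subst h1
      rw [eW1]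
      apply famSpan_rank
      · intro j hj; unfold f1; split_ifs <;> omega
      · intro a b ha hb; unfold f1; split_ifs <;> omega
      · intro a b _ _ hc; exact absurd rfl hc
    by_cases h2 : i = 2
    · subst h2
      rw [eW2]
      apply famSpan_rank
      · intro j hj; unfold f2; split_ifs <;> omega
      · intro a b ha hb; unfold f2; split_ifs <;> omega
      · intro a b _ _ hc; exact absurd rfl hc
    by_cases h3 : i = 3
    · subst h3
      rw [eW3]
      apply famSpan_rank
      · intro j hj; unfold f3; split_ifs <;> omega
      · intro a b ha hb; unfold f3; split_ifs <;> omega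
      · intro a b ha hb hc
        have hb' : ¬ b < u13 + u23 := fun hlt => hc (by unfold c3; rw [if_pos hlt])
        unfold f3 g3
        rw [if_neg hb']
        split_ifs <;> omega
    by_cases h4 : i = 4
    · subst h4
      rw [eW4]
      apply famSpan_rank
      · intro j hj; unfold f4; split_ifs <;> omega
      · intro a b ha hb; unfold f4; split_ifs <;> omega
      · intro a b ha hb hc
        have hb' : b < d := by
          by_contra hlt
          exact hc (by unfold c4; rw [if_neg hlt])
        unfold f4 g4
        rw [if_pos hb']
        split_ifs <;> omega
    · have hmi : m i ≤ m 1 := hmono 1 i (by omega) (by omega) (by omega)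
      rw [eWo i h1 h2 h3 h4]
      apply famSpan_rank
      · intro j hj; simp only [id]; omega
      · intro a b ha hb h; simpa using h
      · intro a b _ _ hc; exact absurd rfl hc
  · -- no quadric
    intro q hq
    have hq1 := hq 1 (by simp only [Finset.mem_Icc]; omega)
    have hq2 := hq 2 (by simp only [Finset.mem_Icc]; omega)
    have hq3 := hq 3 (by simp only [Finset.mem_Icc]; omega)
    have hq4 := hq 4 (by simp only [Finset.mem_Icc]; omega)
    rw [eW1] at hq1
    rw [eW2] at hq2
    rw [eW3] at hq3
    rw [eW4] at hq4
    -- shorthand for block boundaries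
    -- A = [0,u12), B = [u12, u12+u13), C = [u12+u13, oX), X = [oX, oY), Y = [oY, n+1)
    -- oX = u12+u13+u23, oY = oX + d
    -- membership lemmas
    have hW1mem : ∀ t, (t < u12 + u13 ∨ (u12+u13+u23 ≤ t ∧ t < u12+u13+u23+d)) →
        ee (n+1) t ∈ famSpan (n+1) (m 1 + 1) (f1 (u12+u13) (u12+u13+u23)) (f1 (u12+u13) (u12+u13+u23)) (fun _ => 0) := by
      intro t ht
      rcases ht with h | h
      · exact mem_fam_of_f _ _ _ _ _ (j := t) (by omega)
          (by unfold f1; split_ifs <;> omega) rfl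
      · exact mem_fam_of_f _ _ _ _ _ (j := u12 + u13 + (t - (u12+u13+u23))) (by omega)
          (by unfold f1; split_ifs <;> omega) rfl
    have hW2mem : ∀ t, (t < u12 ∨ (u12+u13 ≤ t ∧ t < u12+u13+u23) ∨
        (u12+u13+u23+d ≤ t ∧ t < n+1)) →
        ee (n+1) t ∈ famSpan (n+1) (m 2 + 1) (f2 u12 u13 u23 d) (f2 u12 u13 u23 d) (fun _ => 0) := by
      intro t ht
      rcases ht with h | h | h
      · exact mem_fam_of_f _ _ _ _ _ (j := t) (by omega)
          (by unfold f2; split_ifs <;> omega) rfl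
      · exact mem_fam_of_f _ _ _ _ _ (j := u12 + (t - (u12+u13))) (by omega)
          (by unfold f2; split_ifs <;> omega) rfl
      · exact mem_fam_of_f _ _ _ _ _ (j := u12 + u23 + (t - (u12+u13+u23+d))) (by omega)
          (by unfold f2; split_ifs <;> omega) rfl
    have hW3mem : ∀ t, (u12 ≤ t ∧ t < u12+u13+u23) →
        ee (n+1) t ∈ famSpan (n+1) (m 3 + 1) (f3 u12 u13 u23) (g3 u12 u13 u23 d) (c3 u13 u23) := by
      intro t ht
      exact mem_fam_of_f _ _ _ _ _ (j := t - u12) (by omega)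
        (by unfold f3; split_ifs <;> omega)
        (by unfold c3; rw [if_pos (by omega)])
    have hW3graph : ∀ k, k < d →
        ee (n+1) (u12+u13+u23+k) + (1:ℂ) • ee (n+1) (u12+u13+u23+d+k) ∈
          famSpan (n+1) (m 3 + 1) (f3 u12 u13 u23) (g3 u12 u13 u23 d) (c3 u13 u23) := by
      intro k hk
      exact mem_fam' _ _ _ _ _ (j := u13 + u23 + k) (by omega)
        (by unfold f3; split_ifs <;> omega)
        (by unfold g3; split_ifs <;> omega)
        (by unfold c3; rw [if_neg (by omega)])
    have hW4graph : ∀ k, k < d →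
        ee (n+1) (u12+u13+u23+k) + ((k:ℂ) + 1) • ee (n+1) (u12+u13+u23+d+k) ∈
          famSpan (n+1) (m 4 + 1) (f4 u12 u13 u23 d) (g4 u12 u13 u23 d) (c4 d) := by
      intro k hk
      exact mem_fam' _ _ _ _ _ (j := k) (by omega)
        (by unfold f4; split_ifs <;> omega)
        (by unfold g4; split_ifs <;> omega)
        (by unfold c4; rw [if_pos hk])
    -- polar-form vanishing lemmas
    have hS1 : ∀ i j, (i < u12 + u13 ∨ (u12+u13+u23 ≤ i ∧ i < u12+u13+u23+d)) →
        (j < u12 + u13 ∨ (u12+u13+u23 ≤ j ∧ j < u12+u13+u23+d)) →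
        QuadraticMap.polar q (ee (n+1) i) (ee (n+1) j) = 0 := fun i j hi hj =>
      polar_zero_of_mem q hq1 (hW1mem i hi) (hW1mem j hj)
    have hS2 : ∀ i j, (i < u12 ∨ (u12+u13 ≤ i ∧ i < u12+u13+u23) ∨ (u12+u13+u23+d ≤ i ∧ i < n+1)) →
        (j < u12 ∨ (u12+u13 ≤ j ∧ j < u12+u13+u23) ∨ (u12+u13+u23+d ≤ j ∧ j < n+1)) →
        QuadraticMap.polar q (ee (n+1) i) (ee (n+1) j) = 0 := fun i j hi hj =>
      polar_zero_of_mem q hq2 (hW2mem i hi) (hW2mem j hj)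
    have hBC : ∀ i j, (u12 ≤ i ∧ i < u12+u13+u23) → (u12 ≤ j ∧ j < u12+u13+u23) →
        QuadraticMap.polar q (ee (n+1) i) (ee (n+1) j) = 0 := fun i j hi hj =>
      polar_zero_of_mem q hq3 (hW3mem i hi) (hW3mem j hj)
    -- B-with-Y
    have hBY : ∀ i j, (u12 ≤ i ∧ i < u12 + u13) → (u12+u13+u23+d ≤ j ∧ j < n+1) →
        QuadraticMap.polar q (ee (n+1) i) (ee (n+1) j) = 0 := by
      intro i j hi hj
      set k := j - (u12+u13+u23+d) with hk
      have hkd : k < d := by omega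
      have hj' : j = u12+u13+u23+d+k := by omega
      have t1 := polar_zero_of_mem q hq3 (hW3mem i (by omega)) (hW3graph k hkd)
      rw [QuadraticMap.polar_add_right, QuadraticMap.polar_smul_right, one_smul,
        hS1 i (u12+u13+u23+k) (by omega) (by omega), zero_add] at t1
      rw [hj']
      exact t1
    -- C-with-X
    have hCX : ∀ i j, (u12+u13 ≤ i ∧ i < u12+u13+u23) → (u12+u13+u23 ≤ j ∧ j < u12+u13+u23+d) →
        QuadraticMap.polar q (ee (n+1) i) (ee (n+1) j) = 0 := by
      intro i j hi hj
      set k := j - (u12+u13+u23) with hk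
      have hkd : k < d := by omega
      have hj' : j = u12+u13+u23+k := by omega
      have t1 := polar_zero_of_mem q hq3 (hW3mem i (by omega)) (hW3graph k hkd)
      rw [QuadraticMap.polar_add_right, QuadraticMap.polar_smul_right, one_smul,
        hS2 i (u12+u13+u23+d+k) (by omega) (by omega), add_zero] at t1
      rw [hj']
      exact t1
    -- X-with-Y
    have hXY : ∀ i j, (u12+u13+u23 ≤ i ∧ i < u12+u13+u23+d) → (u12+u13+u23+d ≤ j ∧ j < n+1) →
        QuadraticMap.polar q (ee (n+1) i) (ee (n+1) j) = 0 := by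
      intro i j hi hj
      obtain ⟨k, hkd, rfl⟩ : ∃ k, k < d ∧ i = u12+u13+u23+k :=
        ⟨i - (u12+u13+u23), by omega, by omega⟩
      obtain ⟨l, hld, rfl⟩ : ∃ l, l < d ∧ j = u12+u13+u23+d+l :=
        ⟨j - (u12+u13+u23+d), by omega, by omega⟩
      have zxx : QuadraticMap.polar q (ee (n+1) (u12+u13+u23+k)) (ee (n+1) (u12+u13+u23+l)) = 0 :=
        hS1 _ _ (by omega) (by omega)
      have zyy : QuadraticMap.polar q (ee (n+1) (u12+u13+u23+d+k)) (ee (n+1) (u12+u13+u23+d+l)) = 0 :=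
        hS2 _ _ (by omega) (by omega)
      have t1 := polar_zero_of_mem q hq3 (hW3graph k hkd) (hW3graph l hld)
      have t2 := polar_zero_of_mem q hq4 (hW4graph k hkd) (hW4graph l hld)
      rw [QuadraticMap.polar_add_left, QuadraticMap.polar_add_right,
        QuadraticMap.polar_add_right, QuadraticMap.polar_smul_left,
        QuadraticMap.polar_smul_left, QuadraticMap.polar_smul_right,
        QuadraticMap.polar_smul_right, zxx, zyy] at t1 t2
      simp only [smul_eq_mul, one_mul, mul_zero, zero_add, add_zero] at t1 t2
      -- t1 : P1 + P2 = 0, t2 : (l+1) * P1 + (k+1) * ((l+1)*0? ...)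
      set P1 := QuadraticMap.polar q (ee (n+1) (u12+u13+u23+k)) (ee (n+1) (u12+u13+u23+d+l)) with hP1
      set P2 := QuadraticMap.polar q (ee (n+1) (u12+u13+u23+d+k)) (ee (n+1) (u12+u13+u23+l)) with hP2
      show P1 = 0
      by_cases hkl : k = l
      · have hcomm : P2 = P1 := by rw [hP1, hP2, hkl]; exact QuadraticMap.polar_comm _ _ _
        rw [hcomm] at t1
        have : P1 + P1 = 0 := t1
        exact add_self_eq_zero.mp this
      · have hne : ((l:ℂ) + 1) - ((k:ℂ) + 1) ≠ 0 := by
          intro h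
          have h' : (l:ℂ) = (k:ℂ) := by linear_combination h
          exact hkl (by exact_mod_cast h'.symm)
        have hz : (((l:ℂ) + 1) - ((k:ℂ) + 1)) * P1 = 0 := by
          linear_combination t2 - ((k:ℂ) + 1) * t1
        rcases mul_eq_zero.mp hz with h | h
        · exact absurd h hne
        · exact h
    -- now the full case analysis
    have main : ∀ i j, i < n+1 → j < n+1 →
        QuadraticMap.polar q (ee (n+1) i) (ee (n+1) j) = 0 := by
      intro i j hi hj
      have hblk : ∀ t, t < n+1 → t < u12 ∨ (u12 ≤ t ∧ t < u12+u13) ∨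
          (u12+u13 ≤ t ∧ t < u12+u13+u23) ∨ (u12+u13+u23 ≤ t ∧ t < u12+u13+u23+d) ∨
          (u12+u13+u23+d ≤ t ∧ t < n+1) := by
        intro t ht; omega
      rcases hblk i hi with hiA | hiB | hiC | hiX | hiY <;>
        rcases hblk j hj with hjA | hjB | hjC | hjX | hjY <;>
        first
          | exact hS1 i j (by omega) (by omega)
          | exact hS2 i j (by omega) (by omega)
          | exact hBC i j (by omega) (by omega)
          | exact hBY i j (by omega) (by omega)
          | exact hCX i j (by omega) (by omega)
          | exact hXY i j (by omega) (by omega)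
          | (rw [QuadraticMap.polar_comm]
             first
               | exact hBY j i (by omega) (by omega)
               | exact hCX j i (by omega) (by omega)
               | exact hXY j i (by omega) (by omega))
    exact q_eq_zero_of_polar q main
end

section
/- Let V = ℂ^{n+1}, let W_1, …, W_s ⊆ V be subspaces, and let U ⊆ V be a subspace such that every quadratic form q on V vanishing identically on all the W_i has U contained in the radical of its polar bilinear form. Let π : V → V/U be the quotient map. Then the vector space of quadratic forms on V vanishing on all the W_i is isomorphic to (in particular has the same finite dimension as) the vector space of quadratic forms on V/U vanishing on all the images π(W_i). (This is the projection principle: quadrics through Λ that are cones with vertex containing a fixed linear space V correspond to quadrics through the projection Λ′ of Λ from V.) -/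
/-- The vector space of quadratic forms on a module `M` vanishing identically on each of
the subspaces `W i`. -/
def quadVanishing {M : Type*} [AddCommGroup M] [Module ℂ M] {s : ℕ}
    (W : Fin s → Submodule ℂ M) : Submodule ℂ (QuadraticForm ℂ M) where
  carrier := {q | ∀ i, ∀ v ∈ W i, q v = 0}
  add_mem' := by
    intro a b ha hb i v hv
    simp [ha i v hv, hb i v hv]
  zero_mem' := by intro i v hv; simp
  smul_mem' := by
    intro c a ha i v hv
    simp [ha i v hv]

/-- Composition with a linear map, as a linear map on quadratic forms. -/
def quadCompLM {M N : Type*} [AddCommGroup M] [Module ℂ M] [AddCommGroup N] [Module ℂ N]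
    (f : M →ₗ[ℂ] N) : QuadraticForm ℂ N →ₗ[ℂ] QuadraticForm ℂ M where
  toFun q := q.comp f
  map_add' a b := by ext x; simp [QuadraticMap.comp_apply]
  map_smul' c a := by ext x; simp [QuadraticMap.comp_apply]

/-- Projection principle: if every quadratic form vanishing on all the `W i` has `U`
contained in the radical of its polar bilinear form, then the quadratic forms on `V`
vanishing on the `W i` are linearly isomorphic to (in particular have the same finite
dimension as) the quadratic forms on `V ⧸ U` vanishing on the images of the `W i` under
the quotient map. -/
theorem stmt11 (n s : ℕ) (W : Fin s → Submodule ℂ (Fin (n + 1) → ℂ))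
    (U : Submodule ℂ (Fin (n + 1) → ℂ))
    (hU : ∀ q : QuadraticForm ℂ (Fin (n + 1) → ℂ),
      (∀ i, ∀ v ∈ W i, q v = 0) →
        ∀ u ∈ U, ∀ w : Fin (n + 1) → ℂ, QuadraticMap.polar (⇑q) u w = 0) :
    Nonempty ((quadVanishing W) ≃ₗ[ℂ]
        (quadVanishing (fun i => (W i).map U.mkQ))) ∧
      Module.finrank ℂ (quadVanishing W) =
        Module.finrank ℂ (quadVanishing (fun i => (W i).map U.mkQ)) := by
  classical
  set V := Fin (n + 1) → ℂ
  -- every q vanishing on the W i descends to the quotient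
  have key : ∀ q : QuadraticForm ℂ V, (∀ i, ∀ v ∈ W i, q v = 0) →
      ∃ q' : QuadraticForm ℂ (V ⧸ U), q'.comp U.mkQ = q := by
    intro q hq
    set B : LinearMap.BilinForm ℂ V := QuadraticMap.associated (R := ℂ) q with hBdef
    have hBpolar : ∀ x y, B x y = ⅟(2:ℂ) * QuadraticMap.polar (⇑q) x y := fun x y => rfl
    have hB1 : ∀ u ∈ U, ∀ w, B u w = 0 := by
      intro u hu w; rw [hBpolar, hU q hq u hu w, mul_zero]
    have hB2 : ∀ w, ∀ u ∈ U, B w u = 0 := by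
      intro w u hu
      rw [hBpolar, QuadraticMap.polar_comm, hU q hq u hu w, mul_zero]
    have h1 : U ≤ LinearMap.ker B.flip := by
      intro u hu
      rw [LinearMap.mem_ker]
      refine LinearMap.ext fun w => ?_
      simpa using hB2 w u hu
    let D : (V ⧸ U) →ₗ[ℂ] V →ₗ[ℂ] ℂ := U.liftQ B.flip h1
    have h2 : U ≤ LinearMap.ker D.flip := by
      intro u hu
      rw [LinearMap.mem_ker]
      refine LinearMap.ext fun x => ?_
      induction x using Submodule.Quotient.induction_on with
      | H w =>
        simp only [LinearMap.flip_apply, D, Submodule.liftQ_apply, LinearMap.flip_apply]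
        exact hB1 u hu w
    let B' : LinearMap.BilinForm ℂ (V ⧸ U) := U.liftQ D.flip h2
    have hB' : ∀ v w : V, B' (U.mkQ v) (U.mkQ w) = B v w := by
      intro v w
      rfl
    refine ⟨B'.toQuadraticMap, ?_⟩
    ext v
    rw [QuadraticMap.comp_apply, LinearMap.BilinMap.toQuadraticMap_apply, hB' v v]
    have := QuadraticMap.toQuadraticMap_associated (S := ℂ) q
    calc B v v = (QuadraticMap.associated (R := ℂ) q).toQuadraticMap v := rfl
      _ = q v := by rw [this]
  -- the restricted composition map
  have hmap : ∀ q' ∈ quadVanishing (fun i => (W i).map U.mkQ),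
      quadCompLM U.mkQ q' ∈ quadVanishing W := by
    intro q' hq' i v hv
    exact hq' i (U.mkQ v) (Submodule.mem_map_of_mem hv)
  let g : quadVanishing (fun i => (W i).map U.mkQ) →ₗ[ℂ] quadVanishing W :=
    (quadCompLM U.mkQ).restrict hmap
  have hg : Function.Bijective g := by
    constructor
    · intro a b hab
      ext1
      apply QuadraticMap.ext
      intro x
      induction x using Submodule.Quotient.induction_on with
      | H w =>
        have : (quadCompLM U.mkQ (a : QuadraticForm ℂ (V ⧸ U))) w
            = (quadCompLM U.mkQ (b : QuadraticForm ℂ (V ⧸ U))) w := by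
          have := congrArg (fun z : quadVanishing W => (z : QuadraticForm ℂ V) w) hab
          simpa [g, LinearMap.restrict_apply] using this
        simpa [quadCompLM, QuadraticMap.comp_apply] using this
    · rintro ⟨q, hq⟩
      obtain ⟨q', hq'⟩ := key q hq
      have hmem : q' ∈ quadVanishing (fun i => (W i).map U.mkQ) := by
        rintro i x ⟨v, hv, rfl⟩
        have : (q'.comp U.mkQ) v = q v := by rw [hq']
        rw [QuadraticMap.comp_apply] at this
        rw [Submodule.mkQ_apply] at this ⊢
        rw [this]
        exact hq i v hv
      refine ⟨⟨q', hmem⟩, ?_⟩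
      ext1
      simpa [g, LinearMap.restrict_apply, quadCompLM] using hq'
  let e := LinearEquiv.ofBijective g hg
  exact ⟨⟨e.symm⟩, e.symm.finrank_eq⟩
end

section
/- Let s ≥ 2 and let n, p, m_1, …, m_s be integers with m_1 ≥ m_2 ≥ … ≥ m_s ≥ 0, m_1 + m_2 < n, n ≤ 2m_1, Σ_{i=1}^s C(m_i+2,2) ≥ C(n+2,2), and 1 ≤ p ≤ n − m_1. Then 2·Σ_{i : m_i ≤ p−1} C(m_i+2,2) + p·Σ_{i : m_i ≥ p} (2m_i + 3 − p) ≥ 2·[C(n+2,2) − C(n+2−2p,2)]. -/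
private lemma c2aux (x : ℕ) : 2 * (x + 2).choose 2 = (x + 1) * (x + 2) := by
  induction x with
  | zero => rfl
  | succ k ih =>
    have : k + 1 + 2 = (k + 2) + 1 := by omega
    rw [this, Nat.choose_succ_succ, Nat.mul_add, ih, Nat.choose_one_right]
    ring

private lemma ptwiseZ (p x y : ℤ) (hp : 1 ≤ p) (hpx : p ≤ x) (hxy : x ≤ y) :
    (y+1)*(y+2)*((x+1-p)*(x+2-p)) ≤ (y+1-p)*(y+2-p)*((x+1)*(x+2)) := by
  nlinarith [mul_nonneg (mul_nonneg (sub_nonneg.2 hxy) (sub_nonneg.2 hpx)) (by linarith : (0:ℤ) ≤ p),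
    sq_nonneg (x-y), mul_nonneg (sub_nonneg.2 hxy) (by linarith : (0:ℤ) ≤ p),
    mul_pos (by linarith : (0:ℤ) < x+1) (by linarith : (0:ℤ) < y+1)]

private lemma claimC (n p m1 m2 : ℤ) (hp : 1 ≤ p) (hpm2 : p ≤ m2)
    (h12 : m1 + m2 < n) (hn : n ≤ 2*m1) :
    (m2+1-p)*(m2+2-p)*((n+1)*(n+2)-(m1+1)*(m1+2)) ≤
    (m2+1)*(m2+2)*((n-2*p+1)*(n-2*p+2)-(m1+1-p)*(m1+2-p)) := by
  have hq : (0:ℤ) ≤ p - 1 := by linarith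
  have hu : (0:ℤ) ≤ m2 - p := by linarith
  have hw : (0:ℤ) ≤ n - m1 - m2 - 1 := by linarith
  have hz : (0:ℤ) ≤ 2*m1 - n := by linarith
  linarith [(hz),
    (hw),
    (mul_nonneg (hw) hz),
    (mul_nonneg (hw) hw),
    (mul_nonneg (hu) hz),
    (mul_nonneg (hu) hw),
    (mul_nonneg (mul_nonneg (hu) hw) hz),
    (mul_nonneg (mul_nonneg (hu) hw) hw),
    (mul_nonneg (mul_nonneg (hu) hu) hz),
    (mul_nonneg (mul_nonneg (hu) hu) hw),
    (mul_nonneg (hq) hz),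
    (mul_nonneg (hq) hw),
    (mul_nonneg (mul_nonneg (hq) hw) hz),
    (mul_nonneg (mul_nonneg (hq) hw) hw),
    (mul_nonneg (mul_nonneg (hq) hu) hz),
    (mul_nonneg (mul_nonneg (hq) hu) hw),
    (mul_nonneg (mul_nonneg (mul_nonneg (hq) hu) hw) hz),
    (mul_nonneg (mul_nonneg (mul_nonneg (hq) hu) hw) hw),
    (mul_nonneg (mul_nonneg (mul_nonneg (hq) hu) hu) hz),
    (mul_nonneg (mul_nonneg (mul_nonneg (hq) hu) hu) hw),
    (mul_nonneg (mul_nonneg (hq) hq) hz),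
    (mul_nonneg (mul_nonneg (hq) hq) hw),
    (mul_nonneg (mul_nonneg (mul_nonneg (hq) hq) hw) hz),
    (mul_nonneg (mul_nonneg (mul_nonneg (hq) hq) hw) hw),
    (mul_nonneg (mul_nonneg (mul_nonneg (hq) hq) hu) hz),
    (mul_nonneg (mul_nonneg (mul_nonneg (hq) hq) hu) hw)]

private lemma ptwiseN (p x y : ℕ) (hp : 1 ≤ p) (hxy : x ≤ y) :
    (y+1)*(y+2) * ((x+1-p)*(x+2-p)) ≤ (x+1)*(x+2) * ((y+1-p)*(y+2-p)) := by
  rcases Nat.lt_or_ge x p with h | h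
  · have h0 : x + 1 - p = 0 := by omega
    rw [h0, Nat.zero_mul, Nat.mul_zero]
    exact Nat.zero_le _
  · have hpy : p ≤ y := le_trans h hxy
    zify [show p ≤ x+1 by omega, show p ≤ x+2 by omega, show p ≤ y+1 by omega,
      show p ≤ y+2 by omega]
    nlinarith [ptwiseZ (p:ℤ) x y (by exact_mod_cast hp) (by exact_mod_cast h) (by exact_mod_cast hxy)]

private lemma combineZ (A2 B2 a1 b1 a2 b2 S T F1 F2 : ℤ)
    (e1 : F1 + b1 = a1) (e2 : S ≤ F2 + T) (h1 : A2 ≤ a1 + S)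
    (h2 : a2*T ≤ b2*S) (h3 : b2*A2 + a2*b1 ≤ a2*B2 + b2*a1)
    (h4 : b2 ≤ a2) (h5 : 1 ≤ a2) (hT : 0 ≤ T) :
    A2 ≤ F1 + F2 + B2 := by
  have key : a2 * A2 ≤ a2 * (F1 + F2 + B2) := by
    have h6 : (a2 - b2) * A2 ≤ (a2 - b2) * (a1 + S) :=
      mul_le_mul_of_nonneg_left h1 (by linarith)
    have h7 : a2 * S ≤ a2 * (F2 + T) := mul_le_mul_of_nonneg_left e2 (by linarith)
    have e1' : a2 * (F1 + b1) = a2 * a1 := by rw [e1]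
    nlinarith [h6, h7, h2, h3, e1']
  exact le_of_mul_le_mul_left key (by linarith)

/-- Numerical inequality for the even rank case `r = 2p` with `n ≤ 2m_1`.
(`m` is 1-indexed; `m_i ≤ p - 1` is rendered as `m i < p`.) -/
theorem stmt16 (n s p : ℕ) (m : ℕ → ℕ) (hs : 2 ≤ s)
    (hmono : ∀ i j, 1 ≤ i → i ≤ j → j ≤ s → m j ≤ m i)
    (h12 : m 1 + m 2 < n) (hn : n ≤ 2 * m 1)
    (hsum : (n + 2).choose 2 ≤ ∑ i ∈ Finset.Icc 1 s, (m i + 2).choose 2)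
    (hp1 : 1 ≤ p) (hp2 : p ≤ n - m 1) :
    2 * ((n + 2).choose 2 - (n + 2 - 2 * p).choose 2) ≤
      2 * ∑ i ∈ (Finset.Icc 1 s).filter (fun i => m i < p), (m i + 2).choose 2
        + p * ∑ i ∈ (Finset.Icc 1 s).filter (fun i => p ≤ m i), (2 * m i + 3 - p) := by
  have hm1n : p + m 1 ≤ n := by omega
  have hpm1 : p ≤ m 1 := by omega
  have h2p : 2 * p ≤ n := by omega
  have hm21 : m 2 ≤ m 1 := hmono 1 2 le_rfl one_le_two hs
  set f : ℕ → ℕ := fun i => (m i + 1) * (m i + 2) - (m i + 1 - p) * (m i + 2 - p) with hf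
  -- Step A : rewrite the RHS as a single sum of f
  have hR : 2 * ∑ i ∈ (Finset.Icc 1 s).filter (fun i => m i < p), (m i + 2).choose 2
        + p * ∑ i ∈ (Finset.Icc 1 s).filter (fun i => p ≤ m i), (2 * m i + 3 - p)
        = ∑ i ∈ Finset.Icc 1 s, f i := by
    have hPf : ∀ i ∈ (Finset.Icc 1 s).filter (fun i => m i < p),
        2 * (m i + 2).choose 2 = f i := by
      intro i hi
      have hip : m i < p := (Finset.mem_filter.mp hi).2
      have h0 : m i + 1 - p = 0 := by omega
      simp only [hf, h0, Nat.zero_mul, Nat.sub_zero, c2aux]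
    have hQf : ∀ i ∈ (Finset.Icc 1 s).filter (fun i => p ≤ m i),
        p * (2 * m i + 3 - p) = f i := by
      intro i hi
      have hip : p ≤ m i := (Finset.mem_filter.mp hi).2
      simp only [hf]
      zify [show p ≤ 2 * m i + 3 by omega, show p ≤ m i + 1 by omega,
        show p ≤ m i + 2 by omega,
        show (m i + 1 - p) * (m i + 2 - p) ≤ (m i + 1) * (m i + 2) from
          Nat.mul_le_mul (Nat.sub_le _ _) (Nat.sub_le _ _)]
      ring
    have hfil : (Finset.Icc 1 s).filter (fun i => p ≤ m i)
        = (Finset.Icc 1 s).filter (fun i => ¬ m i < p) := by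
      apply Finset.filter_congr
      intro x _
      simp [not_lt]
    rw [Finset.mul_sum, Finset.mul_sum, Finset.sum_congr rfl hPf, Finset.sum_congr rfl hQf,
      hfil, Finset.sum_filter_add_sum_filter_not]
  rw [hR]
  -- Step B : reduce to the key inequality
  have hsplit : n + 2 - 2 * p = (n - 2 * p) + 2 := by omega
  have hc2b : 2 * (n + 2 - 2 * p).choose 2 = (n - 2 * p + 1) * (n - 2 * p + 2) := by
    rw [hsplit]; exact c2aux _
  rw [Nat.mul_sub, c2aux, hc2b]
  apply Nat.sub_le_iff_le_add.mpr
  -- key : (n+1)(n+2) ≤ Σ f + (n-2p+1)(n-2p+2)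
  have hins : Finset.Icc 1 s = insert 1 (Finset.Icc 2 s) := by
    ext x
    simp only [Finset.mem_Icc, Finset.mem_insert]
    omega
  have h1mem : (1:ℕ) ∉ Finset.Icc 2 s := by simp
  have h1 : (n + 1) * (n + 2) ≤ ∑ i ∈ Finset.Icc 1 s, (m i + 1) * (m i + 2) := by
    calc (n + 1) * (n + 2) = 2 * (n + 2).choose 2 := (c2aux n).symm
      _ ≤ 2 * ∑ i ∈ Finset.Icc 1 s, (m i + 2).choose 2 := Nat.mul_le_mul_left 2 hsum
      _ = ∑ i ∈ Finset.Icc 1 s, 2 * (m i + 2).choose 2 := Finset.mul_sum _ _ _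
      _ = ∑ i ∈ Finset.Icc 1 s, (m i + 1) * (m i + 2) := by
          exact Finset.sum_congr rfl (fun i _ => c2aux (m i))
  rw [hins, Finset.sum_insert h1mem] at h1 ⊢
  -- abbreviations
  have h2 : ((m 2 + 1) * (m 2 + 2)) * ∑ i ∈ Finset.Icc 2 s, (m i + 1 - p) * (m i + 2 - p)
      ≤ ((m 2 + 1 - p) * (m 2 + 2 - p)) * ∑ i ∈ Finset.Icc 2 s, (m i + 1) * (m i + 2) := by
    rw [Finset.mul_sum, Finset.mul_sum]
    apply Finset.sum_le_sum
    intro i hi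
    rw [Finset.mem_Icc] at hi
    have hmi2 : m i ≤ m 2 := hmono 2 i one_le_two hi.1 hi.2
    calc ((m 2 + 1) * (m 2 + 2)) * ((m i + 1 - p) * (m i + 2 - p))
        ≤ ((m i + 1) * (m i + 2)) * ((m 2 + 1 - p) * (m 2 + 2 - p)) := ptwiseN p (m i) (m 2) hp1 hmi2
      _ = ((m 2 + 1 - p) * (m 2 + 2 - p)) * ((m i + 1) * (m i + 2)) := Nat.mul_comm _ _
  have h3 : ((m 2 + 1 - p) * (m 2 + 2 - p)) * ((n + 1) * (n + 2))
        + ((m 2 + 1) * (m 2 + 2)) * ((m 1 + 1 - p) * (m 1 + 2 - p))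
      ≤ ((m 2 + 1) * (m 2 + 2)) * ((n - 2 * p + 1) * (n - 2 * p + 2))
        + ((m 2 + 1 - p) * (m 2 + 2 - p)) * ((m 1 + 1) * (m 1 + 2)) := by
    rcases Nat.lt_or_ge (m 2) p with h | h
    · have h0 : m 2 + 1 - p = 0 := by omega
      rw [h0, Nat.zero_mul, Nat.zero_mul, Nat.zero_mul]
      have hb1B : (m 1 + 1 - p) * (m 1 + 2 - p) ≤ (n - 2 * p + 1) * (n - 2 * p + 2) :=
        Nat.mul_le_mul (by omega) (by omega)
      have := Nat.mul_le_mul_left ((m 2 + 1) * (m 2 + 2)) hb1B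
      omega
    · zify [show p ≤ m 1 + 1 by omega, show p ≤ m 1 + 2 by omega, show p ≤ m 2 + 1 by omega,
        show p ≤ m 2 + 2 by omega, h2p]
      linarith [claimC (n:ℤ) p (m 1) (m 2) (by exact_mod_cast hp1) (by exact_mod_cast h)
        (by exact_mod_cast h12) (by exact_mod_cast hn)]
  have h4 : (m 2 + 1 - p) * (m 2 + 2 - p) ≤ (m 2 + 1) * (m 2 + 2) :=
    Nat.mul_le_mul (Nat.sub_le _ _) (Nat.sub_le _ _)
  have h5 : 1 ≤ (m 2 + 1) * (m 2 + 2) := Nat.one_le_iff_ne_zero.mpr (by positivity)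
  have e1 : f 1 + (m 1 + 1 - p) * (m 1 + 2 - p) = (m 1 + 1) * (m 1 + 2) := by
    have hba : (m 1 + 1 - p) * (m 1 + 2 - p) ≤ (m 1 + 1) * (m 1 + 2) :=
      Nat.mul_le_mul (Nat.sub_le _ _) (Nat.sub_le _ _)
    simp only [hf]
    omega
  have e2 : ∑ i ∈ Finset.Icc 2 s, (m i + 1) * (m i + 2)
      ≤ (∑ i ∈ Finset.Icc 2 s, f i) + ∑ i ∈ Finset.Icc 2 s, (m i + 1 - p) * (m i + 2 - p) := by
    rw [← Finset.sum_add_distrib]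
    apply Finset.sum_le_sum
    intro i _
    have hba : (m i + 1 - p) * (m i + 2 - p) ≤ (m i + 1) * (m i + 2) :=
      Nat.mul_le_mul (Nat.sub_le _ _) (Nat.sub_le _ _)
    simp only [hf]
    omega
  have key := combineZ ((n + 1) * (n + 2) : ℤ) ((n - 2*p + 1) * (n - 2*p + 2) : ℤ)
    (((m 1 + 1) * (m 1 + 2) : ℕ) : ℤ) (((m 1 + 1 - p) * (m 1 + 2 - p) : ℕ) : ℤ)
    (((m 2 + 1) * (m 2 + 2) : ℕ) : ℤ) (((m 2 + 1 - p) * (m 2 + 2 - p) : ℕ) : ℤ)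
    ((∑ i ∈ Finset.Icc 2 s, (m i + 1) * (m i + 2) : ℕ) : ℤ)
    ((∑ i ∈ Finset.Icc 2 s, (m i + 1 - p) * (m i + 2 - p) : ℕ) : ℤ)
    ((f 1 : ℕ) : ℤ) ((∑ i ∈ Finset.Icc 2 s, f i : ℕ) : ℤ)
    (by exact_mod_cast e1) (by exact_mod_cast e2)
    (by push_cast [Nat.cast_sub (by omega : 2*p ≤ n)] at *; exact_mod_cast h1)
    (by exact_mod_cast h2)
    (by push_cast [Nat.cast_sub (by omega : 2*p ≤ n)] at *; exact_mod_cast h3)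
    (by exact_mod_cast h4) (by exact_mod_cast h5) (by positivity)
  have keyN : (n + 1) * (n + 2) ≤ f 1 + (∑ i ∈ Finset.Icc 2 s, f i)
      + (n - 2*p + 1) * (n - 2*p + 2) := by
    have hcast : ((n : ℤ) - 2*p + 1) * ((n:ℤ) - 2*p + 2)
        = (((n - 2*p + 1) * (n - 2*p + 2) : ℕ) : ℤ) := by
      push_cast [Nat.cast_sub (by omega : 2*p ≤ n)]
      ring
    rw [hcast] at key
    exact_mod_cast key
  omega
end

section
/- Let s ≥ 2 and let n, p, m_1, …, m_s be integers with m_1 ≥ m_2 ≥ … ≥ m_s ≥ 0, m_1 + m_2 < n, n ≥ 2m_1 + 1, Σ_{i=1}^s C(m_i+2,2) ≥ C(n+2,2), and 1 ≤ p with 2p ≤ n + 1. Then 2·Σ_{i : m_i ≤ p−1} C(m_i+2,2) + p·Σ_{i : m_i ≥ p} (2m_i + 3 − p) ≥ 2·[C(n+2,2) − C(n+2−2p,2)]. -/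
/-!
Split off the indices with `m i ≥ p`. For such an index,
`2·C(m+2,2) = p·(2m+3-p) + a·(a+1)` with `a = m+1-p`, and the same identity with `2p` in place
of `p` gives `2·[C(n+2,2) - C(n+2-2p,2)] = 2p·(2n+3-2p)`. By the hypothesis on `∑ C(m_i+2,2)`
the claim therefore holds as soon as the defects `∑ a_i (a_i+1)` are at most `K (K+1)`, where
`K = n+1-2p`. Since `n ≥ 2m_1+1` gives `2a_i ≤ K`, the only way this can fail is with at least
four large indices and `∑ a_i ≥ 2K-1`, and then the term `p·∑ (2m_i+3-p)` alone is big enough.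
-/

open Finset

lemma two_mul_choose_two_add_one (k : ℕ) : 2 * (k + 1).choose 2 = k * (k + 1) := by
  have := Nat.add_one_mul_choose_eq k 1
  rw [Nat.choose_one_right] at this
  linarith

lemma two_mul_choose_two_add_two {x p : ℕ} (h : p ≤ x + 1) :
    2 * (x + 2).choose 2 = p * (2 * x + 3 - p) + (x + 1 - p) * (x + 1 - p + 1) := by
  rw [two_mul_choose_two_add_one]
  zify [h, show p ≤ 2 * x + 3 by omega]
  ring

lemma two_mul_choose_two_sub_choose_two {n p : ℕ} (hp : 2 * p ≤ n + 1) :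
    2 * ((n + 2).choose 2 - (n + 2 - 2 * p).choose 2) = p * (2 * (2 * n + 3 - 2 * p)) := by
  have hn := two_mul_choose_two_add_two (x := n) (p := 2 * p) hp
  have hK := two_mul_choose_two_add_one (n + 1 - 2 * p)
  rw [show n + 1 - 2 * p + 1 = n + 2 - 2 * p by omega] at hK
  rw [show n + 1 - 2 * p + 1 = n + 2 - 2 * p by omega, mul_assoc] at hn
  rw [mul_left_comm]
  omega

lemma sum_mul_succ_le_or_card_and_sum_ge {ι : Type*} (B : Finset ι) (a : ι → ℕ) {A K : ℕ}
    (ha : ∀ i ∈ B, a i ≤ A) (hAK : 2 * A ≤ K) :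
    ∑ i ∈ B, a i * (a i + 1) ≤ K * (K + 1) ∨ (4 ≤ #B ∧ 2 * K ≤ ∑ i ∈ B, a i + 1) := by
  by_contra! h
  obtain ⟨hgt, hQlt⟩ := h
  set Q := ∑ i ∈ B, a i
  have hE : ∑ i ∈ B, a i * (a i + 1) ≤ Q * (A + 1) := by
    rw [sum_mul]
    exact sum_le_sum fun i hi => Nat.mul_le_mul_left _ (Nat.add_le_add_right (ha i hi) 1)
  have hQ : Q ≤ #B * A := by
    simpa using sum_le_sum ha
  by_cases hcard : 4 ≤ #B
  · have hQK : Q + 2 ≤ 2 * K := by have := hQlt hcard; omega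
    have : Q * (A + 1) ≤ (K - 1) * (K + 2) := by
      have hK : 1 ≤ K := by omega
      calc Q * (A + 1) ≤ 2 * (K - 1) * (A + 1) := Nat.mul_le_mul_right _ (by omega)
        _ = (K - 1) * (2 * (A + 1)) := by ring
        _ ≤ (K - 1) * (K + 2) := Nat.mul_le_mul_left _ (by omega)
    have : (K - 1) * (K + 2) ≤ K * (K + 1) := by
      rcases K with _ | K
      · simp
      · simp only [Nat.add_sub_cancel]; nlinarith
    omega
  · have : Q * (A + 1) ≤ 3 * A * (A + 1) :=
      Nat.mul_le_mul_right _ (hQ.trans (Nat.mul_le_mul_right _ (by omega)))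
    have : 3 * A * (A + 1) ≤ K * (K + 1) := by
      have := Nat.mul_le_mul hAK (Nat.add_le_add_right hAK 1)
      nlinarith [Nat.le_mul_self A]
    omega

section LargeIndices

variable {ι : Type*} {B : Finset ι} {m : ι → ℕ} {p : ℕ}

lemma two_mul_sum_choose_two_eq (hB : ∀ i ∈ B, p ≤ m i + 1) :
    2 * ∑ i ∈ B, (m i + 2).choose 2 = p * ∑ i ∈ B, (2 * m i + 3 - p)
      + ∑ i ∈ B, (m i + 1 - p) * (m i + 1 - p + 1) := by
  rw [mul_sum, mul_sum, ← sum_add_distrib]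
  exact sum_congr rfl fun i hi => two_mul_choose_two_add_two (hB i hi)

lemma sum_two_mul_add_three_sub_eq (hB : ∀ i ∈ B, p ≤ m i + 1) :
    ∑ i ∈ B, (2 * m i + 3 - p) = 2 * ∑ i ∈ B, (m i + 1 - p) + #B * (p + 1) := by
  rw [mul_sum, ← smul_eq_mul, ← sum_const, ← sum_add_distrib]
  exact sum_congr rfl fun i hi => by have := hB i hi; omega

end LargeIndices

theorem stmt17_general (n s p : ℕ) (m : ℕ → ℕ)
    (hmono : ∀ i j, 1 ≤ i → i ≤ j → j ≤ s → m j ≤ m i)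
    (hn : 2 * m 1 + 1 ≤ n)
    (hsum : (n + 2).choose 2 ≤ ∑ i ∈ Finset.Icc 1 s, (m i + 2).choose 2)
    (hp2 : 2 * p ≤ n + 1) :
    2 * ((n + 2).choose 2 - (n + 2 - 2 * p).choose 2) ≤
      2 * ∑ i ∈ (Finset.Icc 1 s).filter (fun i => m i < p), (m i + 2).choose 2
        + p * ∑ i ∈ (Finset.Icc 1 s).filter (fun i => p ≤ m i), (2 * m i + 3 - p) := by
  set B := (Icc 1 s).filter (fun i => p ≤ m i)
  have hB : ∀ i ∈ B, p ≤ m i ∧ m i ≤ m 1 := fun i hi => by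
    obtain ⟨hi, hp⟩ := mem_filter.mp hi
    exact ⟨hp, hmono 1 i le_rfl (mem_Icc.mp hi).1 (mem_Icc.mp hi).2⟩
  have hB' : ∀ i ∈ B, p ≤ m i + 1 := fun i hi => (hB i hi).1.trans (Nat.le_succ _)
  have hsplit : ∑ i ∈ (Icc 1 s).filter (fun i => m i < p), (m i + 2).choose 2
      + ∑ i ∈ B, (m i + 2).choose 2 = ∑ i ∈ Icc 1 s, (m i + 2).choose 2 := by
    simpa only [not_lt] using sum_filter_add_sum_filter_not (Icc 1 s) (fun i => m i < p)
      (fun i => (m i + 2).choose 2)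
  have hbig := two_mul_sum_choose_two_eq hB'
  have hK : 2 * (n + 2 - 2 * p).choose 2 = (n + 1 - 2 * p) * (n + 1 - 2 * p + 1) := by
    rw [← two_mul_choose_two_add_one, show n + 1 - 2 * p + 1 = n + 2 - 2 * p by omega]
  rcases sum_mul_succ_le_or_card_and_sum_ge B (fun i => m i + 1 - p) (A := m 1 + 1 - p)
    (K := n + 1 - 2 * p) (fun i hi => by have := hB i hi; omega) (by omega) with hE | ⟨hcard, hQ⟩
  · omega
  · have hSB : 2 * (2 * n + 3 - 2 * p) ≤ ∑ i ∈ B, (2 * m i + 3 - p) := by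
      rw [sum_two_mul_add_three_sub_eq hB']
      have := Nat.mul_le_mul_right (p + 1) hcard
      omega
    rw [two_mul_choose_two_sub_choose_two hp2]
    exact (Nat.mul_le_mul_left p hSB).trans (Nat.le_add_left _ _)

/-- Numerical inequality for the even rank case `r = 2p` with `n ≥ 2m_1 + 1`.
(`m` is 1-indexed; `m_i ≤ p - 1` is rendered as `m i < p`.) -/
theorem stmt17 (n s p : ℕ) (m : ℕ → ℕ) (hs : 2 ≤ s)
    (hmono : ∀ i j, 1 ≤ i → i ≤ j → j ≤ s → m j ≤ m i)
    (h12 : m 1 + m 2 < n) (hn : 2 * m 1 + 1 ≤ n)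
    (hsum : (n + 2).choose 2 ≤ ∑ i ∈ Finset.Icc 1 s, (m i + 2).choose 2)
    (hp1 : 1 ≤ p) (hp2 : 2 * p ≤ n + 1) :
    2 * ((n + 2).choose 2 - (n + 2 - 2 * p).choose 2) ≤
      2 * ∑ i ∈ (Finset.Icc 1 s).filter (fun i => m i < p), (m i + 2).choose 2
        + p * ∑ i ∈ (Finset.Icc 1 s).filter (fun i => p ≤ m i), (2 * m i + 3 - p) :=
  stmt17_general n s p m hmono hn hsum hp2
end

section
/- Let s ≥ 2 and let n, p, m_1, …, m_s be integers with m_1 ≥ m_2 ≥ … ≥ m_s ≥ 0, m_1 + m_2 < n, n ≤ 2m_1 + 1, Σ_{i=1}^s C(m_i+2,2) ≥ C(n+2,2), and 0 ≤ p ≤ n − m_1 − 1. Then 2·Σ_{i : m_i ≤ p−1} C(m_i+2,2) + Σ_{i : m_i ≥ p} (2m_i + 2 + p(2m_i + 1 − p)) ≥ 2·[C(n+2,2) − C(n+1−2p,2)]. -/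
lemma two_mul_choose_two' (k : ℕ) : 2 * (k + 2).choose 2 = (k + 2) * (k + 1) := by
  rw [Nat.choose_two_right, show k + 2 - 1 = k + 1 from rfl, Nat.mul_div_cancel']
  rw [mul_comm]
  exact (Nat.even_mul_succ_self (k+1)).two_dvd

lemma key_ineq (a d p t : ℤ) (hp : 0 ≤ p) (hpt : p ≤ t) (htd : t ≤ d) (hda : d ≤ a) :
    (d + 1) * (2*a + d + 4) * ((t - p) * (t + 1 - p)) ≤
    (d + 1 - p) * (2*a + d + 2 - 3*p) * ((t + 1) * (t + 2)) := by
  have h0 : (0:ℤ) ≤ t - p := by linarith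
  have h1 : (t - p) * (d + 1) ≤ (t + 1) * (d - p) := by nlinarith
  have h2 : (t + 1 - p) * (d + 2) ≤ (t + 2) * (d + 1 - p) := by nlinarith
  have hfh : (t - p) * (t + 1 - p) * ((d + 1) * (d + 2)) ≤
      (t + 1) * (t + 2) * ((d - p) * (d + 1 - p)) := by
    nlinarith [mul_le_mul h1 h2 (by nlinarith) (by nlinarith)]
  have h3' : (2*a + d + 4) * (d - p) ≤ (2*a + d + 2 - 3*p) * (d + 2) := by nlinarith [mul_nonneg hp (show (0:ℤ) ≤ a - d by linarith)]
  have h3 : (d + 1) * (2*a + d + 4) * ((d - p) * (d + 1 - p)) ≤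
      (d + 1 - p) * (2*a + d + 2 - 3*p) * ((d + 1) * (d + 2)) := by
    nlinarith [mul_le_mul_of_nonneg_left h3' (mul_nonneg (by linarith : (0:ℤ) ≤ d + 1) (by linarith : (0:ℤ) ≤ d + 1 - p))]
  have hfd : (0:ℤ) < (d + 1) * (d + 2) := by nlinarith
  have hA : (0:ℤ) ≤ (d + 1) * (2*a + d + 4) := by nlinarith
  have hft : (0:ℤ) ≤ (t + 1) * (t + 2) := by nlinarith
  refine le_of_mul_le_mul_right ?_ hfd
  calc (d + 1) * (2*a + d + 4) * ((t - p) * (t + 1 - p)) * ((d + 1) * (d + 2))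
      = (d + 1) * (2*a + d + 4) * ((t - p) * (t + 1 - p) * ((d + 1) * (d + 2))) := by ring
    _ ≤ (d + 1) * (2*a + d + 4) * ((t + 1) * (t + 2) * ((d - p) * (d + 1 - p))) :=
        mul_le_mul_of_nonneg_left hfh hA
    _ = (d + 1) * (2*a + d + 4) * ((d - p) * (d + 1 - p)) * ((t + 1) * (t + 2)) := by ring
    _ ≤ (d + 1 - p) * (2*a + d + 2 - 3*p) * ((d + 1) * (d + 2)) * ((t + 1) * (t + 2)) :=
        mul_le_mul_of_nonneg_right h3 hft
    _ = (d + 1 - p) * (2*a + d + 2 - 3*p) * ((t + 1) * (t + 2)) * ((d + 1) * (d + 2)) := by ring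

/-- Numerical inequality for the odd rank case `r = 2p + 1` with `n ≤ 2m_1 + 1`.
(`m` is 1-indexed; `m_i ≤ p - 1` is rendered as `m i < p`.) -/
theorem stmt18 (n s p : ℕ) (m : ℕ → ℕ) (hs : 2 ≤ s)
    (hmono : ∀ i j, 1 ≤ i → i ≤ j → j ≤ s → m j ≤ m i)
    (h12 : m 1 + m 2 < n) (hn : n ≤ 2 * m 1 + 1)
    (hsum : (n + 2).choose 2 ≤ ∑ i ∈ Finset.Icc 1 s, (m i + 2).choose 2)
    (hp : p ≤ n - m 1 - 1) :
    2 * ((n + 2).choose 2 - (n + 1 - 2 * p).choose 2) ≤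
      2 * ∑ i ∈ (Finset.Icc 1 s).filter (fun i => m i < p), (m i + 2).choose 2
        + ∑ i ∈ (Finset.Icc 1 s).filter (fun i => p ≤ m i),
            (2 * m i + 2 + p * (2 * m i + 1 - p)) := by
  classical
  have ham2 : m 2 ≤ m 1 := hmono 1 2 le_rfl one_le_two hs
  have han : m 1 + 1 ≤ n := by omega
  have hpa : p ≤ m 1 := by omega
  have h2p : 2 * p + 1 ≤ n := by omega
  set S : Finset ℕ := Finset.Icc 1 s with hS
  have h1S : 1 ∈ S := by simp [hS]; omega
  set T : ℕ → ℕ := fun i =>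
    if m i < p then 2 * (m i + 2).choose 2 else 2 * m i + 2 + p * (2 * m i + 1 - p) with hT
  -- split the RHS as a single sum of T
  have hsplit : 2 * ∑ i ∈ S.filter (fun i => m i < p), (m i + 2).choose 2
      + ∑ i ∈ S.filter (fun i => p ≤ m i), (2 * m i + 2 + p * (2 * m i + 1 - p))
      = ∑ i ∈ S, T i := by
    rw [hT, Finset.sum_ite, Finset.mul_sum]
    congr 1
    apply Finset.sum_congr _ (fun _ _ => rfl)
    apply Finset.filter_congr
    intro i _
    simp [not_lt]
  set A := (n - m 1) * (n + m 1 + 3) with hA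
  set B := (n - m 1 - p) * (n + m 1 + 1 - 3 * p) with hB
  have hBA : B ≤ A := Nat.mul_le_mul (by omega) (by omega)
  have hApos : 0 < A := Nat.mul_pos (by omega) (by omega)
  have hAZ : (A : ℤ) = ((n:ℤ) - m 1) * ((n:ℤ) + m 1 + 3) := by
    rw [hA, Nat.cast_mul, Nat.cast_sub (by omega)]; push_cast; ring
  have hBZ : (B : ℤ) = ((n:ℤ) - m 1 - p) * ((n:ℤ) + m 1 + 1 - 3 * p) := by
    rw [hB, Nat.cast_mul, Nat.cast_sub (by omega), Nat.cast_sub (by omega),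
      Nat.cast_sub (by omega)]
    push_cast; ring
  -- per-term bound for i ≥ 2
  have hterm : ∀ i ∈ S.erase 1, (A - B) * (2 * (m i + 2).choose 2) ≤ A * T i := by
    intro i hi
    have hi2 : 2 ≤ i ∧ i ≤ s := by
      rcases Finset.mem_erase.mp hi with ⟨h1, h2⟩
      rw [hS] at h2; simp at h2; omega
    have hmi2 : m i ≤ m 2 := hmono 2 i one_le_two hi2.1 hi2.2
    by_cases hcase : m i < p
    · simp only [hT, if_pos hcase]
      exact Nat.mul_le_mul_right _ (Nat.sub_le A B)
    · push_neg at hcase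
      simp only [hT, if_neg (not_lt.mpr hcase)]
      rw [two_mul_choose_two' (m i)]
      zify [hBA, (show p ≤ 2 * m i + 1 by omega)]
      rw [hAZ, hBZ]
      have hk := key_ineq (m 1 : ℤ) ((n:ℤ) - 1 - (m 1 : ℤ)) (p : ℤ) (m i : ℤ)
        (by positivity) (by exact_mod_cast hcase) (by omega) (by omega)
      nlinarith [hk]
  -- assemble
  rw [hsplit]
  refine Nat.le_of_mul_le_mul_left ?_ hApos
  have hTsum : ∑ i ∈ S, T i = T 1 + ∑ i ∈ S.erase 1, T i := (Finset.add_sum_erase S T h1S).symm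
  rw [hTsum, Nat.mul_add]
  have hterm_sum : (A - B) * ∑ i ∈ S.erase 1, (2 * (m i + 2).choose 2)
      ≤ A * ∑ i ∈ S.erase 1, T i := by
    rw [Finset.mul_sum, Finset.mul_sum]
    exact Finset.sum_le_sum hterm
  refine le_trans ?_ (Nat.add_le_add_left hterm_sum _)
  -- final numeric inequality
  have hT1 : T 1 = 2 * m 1 + 2 + p * (2 * m 1 + 1 - p) := if_neg (by omega)
  have herase : (∑ i ∈ S.erase 1, 2 * (m i + 2).choose 2) + 2 * (m 1 + 2).choose 2
      = ∑ i ∈ S, 2 * (m i + 2).choose 2 := Finset.sum_erase_add S _ h1S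
  have hsum2 : (n + 2) * (n + 1) ≤ ∑ i ∈ S, 2 * (m i + 2).choose 2 := by
    rw [← two_mul_choose_two' n, ← Finset.mul_sum]
    exact Nat.mul_le_mul_left 2 hsum
  have e1 := two_mul_choose_two' n
  have e2 : 2 * (n + 1 - 2 * p).choose 2 = (n + 1 - 2 * p) * (n - 2 * p) := by
    have h := two_mul_choose_two' (n - 1 - 2 * p)
    rw [show n - 1 - 2 * p + 2 = n + 1 - 2 * p by omega] at h
    rw [h]
    congr 1; omega
  have e3 := two_mul_choose_two' (m 1)
  have hLeP : (n + 1 - 2 * p).choose 2 ≤ (n + 2).choose 2 := Nat.choose_le_choose 2 (by omega)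
  have hc1F : 2 * (m 1 + 2).choose 2 ≤ (n + 2) * (n + 1) := by
    rw [← e1]
    exact Nat.mul_le_mul_left 2 (Nat.choose_le_choose 2 (by omega))
  have hE : (n + 2) * (n + 1) - 2 * (m 1 + 2).choose 2
      ≤ ∑ i ∈ S.erase 1, 2 * (m i + 2).choose 2 := by omega
  refine le_trans ?_ (Nat.add_le_add_left (Nat.mul_le_mul_left (A - B) hE) _)
  rw [hT1]
  rw [show 2 * ((n + 2).choose 2 - (n + 1 - 2 * p).choose 2)
      = (n + 2) * (n + 1) - (n + 1 - 2 * p) * (n - 2 * p) by omega]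
  zify [hBA, hc1F, hpa, (show (n + 1 - 2 * p) * (n - 2 * p) ≤ (n + 2) * (n + 1) by omega),
    (show p ≤ 2 * m 1 + 1 by omega)]
  rw [hAZ, hBZ]
  rw [show (2:ℤ) * (((m 1 + 2).choose 2 : ℕ) : ℤ) = ((m 1 : ℤ) + 2) * ((m 1 : ℤ) + 1) from by
    exact_mod_cast e3]
  rw [show ((n + 1 - 2 * p : ℕ) : ℤ) = (n : ℤ) + 1 - 2 * p by omega,
    show ((n - 2 * p : ℕ) : ℤ) = (n : ℤ) - 2 * p by omega]
  refine le_of_eq ?_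
  ring
end

section
/- Let s ≥ 2 and let n, p, m_1, …, m_s be integers with m_1 ≥ m_2 ≥ … ≥ m_s ≥ 0, m_1 + m_2 < n, n ≥ 2m_1 + 2, Σ_{i=1}^s C(m_i+2,2) ≥ C(n+2,2), and 0 ≤ p with 2p ≤ n. Then 2·Σ_{i : m_i ≤ p−1} C(m_i+2,2) + Σ_{i : m_i ≥ p} (2m_i + 2 + p(2m_i + 1 − p)) ≥ 2·[C(n+2,2) − C(n+1−2p,2)]. -/
private lemma aux_le19 {a b : ℕ} (c : ℕ) (h : b = a + c) : a ≤ b := by omega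

private lemma tct19 : ∀ k : ℕ, 2 * (k+1).choose 2 = (k+1) * k
  | 0 => rfl
  | (k+1) => by
    have ih := tct19 k
    rw [Nat.choose_succ_succ, Nat.choose_one_right]
    have h : (k+1+1)*(k+1) = (k+1)*k + 2*(k+1) := by ring
    rw [h, ← ih]; ring

private lemma tct19' (k : ℕ) : 2 * (k+2).choose 2 = (k+2) * (k+1) := tct19 (k+1)

private lemma key19 (n mm p : ℕ) (hpm : p ≤ mm) (hn : 2*mm+2 ≤ n) :
    (2*(n+1)+2*p*(2*n+1-2*p)) * ((mm+2)*(mm+1))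
      ≤ (2*mm+2+p*(2*mm+1-p)) * ((n+2)*(n+1)) := by
  obtain ⟨b, rfl⟩ := Nat.exists_eq_add_of_le hpm
  obtain ⟨d, rfl⟩ := Nat.exists_eq_add_of_le hn
  have e1 : 2*(2*(p+b)+2+d)+1-2*p = 2*p+4*b+2*d+5 := by omega
  have e2 : 2*(p+b)+1-p = p+2*b+1 := by omega
  rw [e1, e2]
  exact aux_le19
    (12 + 10*d + 2*d^2 + 26*b + 16*b*d + 2*b*d^2 + 18*b^2 + 6*b^2*d + 4*b^3
      + 18*p + 15*p*d + 3*p*d^2 + 28*p*b + 18*p*b*d + 2*p*b*d^2 + 10*p*b^2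
      + 4*p*b^2*d + 6*p^2 + 5*p^2*d + p^2*d^2 + 6*p^2*b + 4*p^2*b*d)
    (by ring)

private lemma small19 (n p : ℕ) (hp : 2*p ≤ n) :
    2*(n+1)+2*p*(2*n+1-2*p) ≤ (n+2)*(n+1) := by
  obtain ⟨c, rfl⟩ := Nat.exists_eq_add_of_le hp
  have e : 2*(2*p+c)+1-2*p = 2*p+2*c+1 := by omega
  rw [e]
  exact aux_le19 (c + c*c) (by ring)

private lemma hR19 (n p : ℕ) (hp : 2*p ≤ n) :
    2 * ((n+2).choose 2 - (n+1-2*p).choose 2) = 2*(n+1)+2*p*(2*n+1-2*p) := by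
  obtain ⟨c, rfl⟩ := Nat.exists_eq_add_of_le hp
  have e1 : 2*p+c+1-2*p = c+1 := by omega
  have e2 : 2*(2*p+c)+1-2*p = 2*p+2*c+1 := by omega
  rw [e1, e2, Nat.mul_sub]
  have t1 : 2 * (2*p+c+2).choose 2 = (2*p+c+2)*(2*p+c+1) := tct19' (2*p+c)
  have t2 : 2 * (c+1).choose 2 = (c+1)*c := tct19 c
  rw [t1, t2]
  have hidd : (2*p+c+2)*(2*p+c+1) = (c+1)*c + (2*(2*p+c+1)+2*p*(2*p+2*c+1)) := by
    ring
  rw [hidd]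
  exact Nat.add_sub_cancel_left _ _

/-- Numerical inequality for the odd rank case `r = 2p + 1` with `n ≥ 2m_1 + 2`.
(`m` is 1-indexed; `m_i ≤ p - 1` is rendered as `m i < p`.) -/
theorem stmt19 (n s p : ℕ) (m : ℕ → ℕ) (hs : 2 ≤ s)
    (hmono : ∀ i j, 1 ≤ i → i ≤ j → j ≤ s → m j ≤ m i)
    (h12 : m 1 + m 2 < n) (hn : 2 * m 1 + 2 ≤ n)
    (hsum : (n + 2).choose 2 ≤ ∑ i ∈ Finset.Icc 1 s, (m i + 2).choose 2)
    (hp : 2 * p ≤ n) :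
    2 * ((n + 2).choose 2 - (n + 1 - 2 * p).choose 2) ≤
      2 * ∑ i ∈ (Finset.Icc 1 s).filter (fun i => m i < p), (m i + 2).choose 2
        + ∑ i ∈ (Finset.Icc 1 s).filter (fun i => p ≤ m i),
            (2 * m i + 2 + p * (2 * m i + 1 - p)) := by
  have hmle : ∀ i ∈ Finset.Icc 1 s, 2 * m i + 2 ≤ n := by
    intro i hi
    rw [Finset.mem_Icc] at hi
    have := hmono 1 i le_rfl hi.1 hi.2
    omega
  have hGpos : 0 < (n+2)*(n+1) := by positivity
  have hG2 : 2 * (n+2).choose 2 = (n+2)*(n+1) := tct19' n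
  have hflt : (Finset.Icc 1 s).filter (fun i => ¬ m i < p)
      = (Finset.Icc 1 s).filter (fun i => p ≤ m i) := by
    ext i; simp [not_lt]
  rw [hR19 n p hp]
  apply Nat.le_of_mul_le_mul_right ?_ hGpos
  have hB : ∀ i ∈ (Finset.Icc 1 s).filter (fun i => m i < p),
      (2*(n+1)+2*p*(2*n+1-2*p)) * (2 * (m i + 2).choose 2)
        ≤ (2 * (m i + 2).choose 2) * ((n+2)*(n+1)) := by
    intro i _
    calc (2*(n+1)+2*p*(2*n+1-2*p)) * (2 * (m i + 2).choose 2)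
        ≤ ((n+2)*(n+1)) * (2 * (m i + 2).choose 2) :=
          Nat.mul_le_mul (small19 n p hp) le_rfl
      _ = (2 * (m i + 2).choose 2) * ((n+2)*(n+1)) := Nat.mul_comm _ _
  have hA : ∀ i ∈ (Finset.Icc 1 s).filter (fun i => p ≤ m i),
      (2*(n+1)+2*p*(2*n+1-2*p)) * (2 * (m i + 2).choose 2)
        ≤ (2 * m i + 2 + p * (2 * m i + 1 - p)) * ((n+2)*(n+1)) := by
    intro i hi
    rw [Finset.mem_filter] at hi
    have h2 : 2 * (m i + 2).choose 2 = (m i + 2) * (m i + 1) := tct19' (m i)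
    rw [h2]
    exact key19 n (m i) p hi.2 (hmle i hi.1)
  calc (2*(n+1)+2*p*(2*n+1-2*p)) * ((n+2)*(n+1))
      = (2*(n+1)+2*p*(2*n+1-2*p)) * (2 * (n+2).choose 2) := by rw [hG2]
    _ ≤ (2*(n+1)+2*p*(2*n+1-2*p)) * (2 * ∑ i ∈ Finset.Icc 1 s, (m i + 2).choose 2) :=
        Nat.mul_le_mul le_rfl (Nat.mul_le_mul le_rfl hsum)
    _ = ∑ i ∈ Finset.Icc 1 s, (2*(n+1)+2*p*(2*n+1-2*p)) * (2 * (m i + 2).choose 2) := by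
        rw [Finset.mul_sum, Finset.mul_sum]
    _ = ∑ i ∈ (Finset.Icc 1 s).filter (fun i => m i < p),
          (2*(n+1)+2*p*(2*n+1-2*p)) * (2 * (m i + 2).choose 2)
        + ∑ i ∈ (Finset.Icc 1 s).filter (fun i => ¬ m i < p),
          (2*(n+1)+2*p*(2*n+1-2*p)) * (2 * (m i + 2).choose 2) :=
        (Finset.sum_filter_add_sum_filter_not _ _ _).symm
    _ ≤ ∑ i ∈ (Finset.Icc 1 s).filter (fun i => m i < p),
          (2 * (m i + 2).choose 2) * ((n+2)*(n+1))
        + ∑ i ∈ (Finset.Icc 1 s).filter (fun i => p ≤ m i),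
          (2 * m i + 2 + p * (2 * m i + 1 - p)) * ((n+2)*(n+1)) := by
        rw [hflt]
        exact Nat.add_le_add (Finset.sum_le_sum hB) (Finset.sum_le_sum hA)
    _ = (2 * ∑ i ∈ (Finset.Icc 1 s).filter (fun i => m i < p), (m i + 2).choose 2
          + ∑ i ∈ (Finset.Icc 1 s).filter (fun i => p ≤ m i),
              (2 * m i + 2 + p * (2 * m i + 1 - p))) * ((n+2)*(n+1)) := by
        rw [← Finset.sum_mul, ← Finset.sum_mul, Finset.mul_sum]
        ring
end
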